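/- arXiv:2110.07162 — 5 statements merged into one kernel-verified Lean document; each statement's English description precedes it below -/
import Mathlib

section
/- Let m ≥ 1 be an integer. There exist constants c > 0 and c' > 0 such that for every t > 0 and every X ∈ ℝ^m with 1 ≤ ‖X‖ ≤ 5, | ∫_{{z ∈ ℝ^m : ‖z‖ ≤ ‖X‖/10}} (z₁/‖z‖^{m+1}) · ( e^{−‖X−z‖²/(4t)} − e^{−‖X‖²/(4t)} ) dz | ≤ c · e^{−c'/t}. (In particular the integrand is absolutely integrable on this ball, because the difference of the two Gaussians is O(‖z‖) near z = 0.) -/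
open MeasureTheory Real Filter Set

lemma exp_diff_le {a b M : ℝ} (ha : M ≤ a) (hb : M ≤ b) :
    |Real.exp (-a) - Real.exp (-b)| ≤ |a - b| * Real.exp (-M) := by
  have key : ∀ x y : ℝ, M ≤ x → x ≤ y →
      Real.exp (-x) - Real.exp (-y) ≤ (y - x) * Real.exp (-M) := by
    intro x y hx hxy
    have h1 : Real.exp (-y) = Real.exp (-x) * Real.exp (x - y) := by
      rw [← Real.exp_add]; ring_nf
    have h2 : 1 - Real.exp (x - y) ≤ y - x := by
      have := Real.add_one_le_exp (x - y)
      linarith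
    have h3 : Real.exp (-x) ≤ Real.exp (-M) := Real.exp_le_exp.2 (by linarith)
    have h4 : Real.exp (-x) - Real.exp (-y) = Real.exp (-x) * (1 - Real.exp (x - y)) := by
      rw [h1]; ring
    rw [h4]
    calc Real.exp (-x) * (1 - Real.exp (x - y)) ≤ Real.exp (-x) * (y - x) :=
          mul_le_mul_of_nonneg_left h2 (Real.exp_nonneg _)
      _ ≤ Real.exp (-M) * (y - x) := mul_le_mul_of_nonneg_right h3 (by linarith)
      _ = (y - x) * Real.exp (-M) := by ring
  rcases le_total a b with h | h
  · have h0 : Real.exp (-b) ≤ Real.exp (-a) := Real.exp_le_exp.2 (by linarith)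
    rw [abs_of_nonneg (by linarith), abs_of_nonpos (by linarith)]
    simpa using key a b ha h
  · have h0 : Real.exp (-a) ≤ Real.exp (-b) := Real.exp_le_exp.2 (by linarith)
    rw [abs_of_nonpos (by linarith), abs_of_nonneg (by linarith)]
    simpa [neg_sub] using key b a hb h

lemma coord_le_norm {m : ℕ} (z : EuclideanSpace ℝ (Fin m)) (i : Fin m) :
    |z i| ≤ ‖z‖ := by
  rw [EuclideanSpace.norm_eq, ← Real.sqrt_sq_eq_abs]
  apply Real.sqrt_le_sqrt
  calc z i ^ 2 = ‖z i‖ ^ 2 := by rw [Real.norm_eq_abs, sq_abs]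
    _ ≤ ∑ j, ‖z j‖ ^ 2 := Finset.single_le_sum (f := fun j => ‖z j‖ ^ 2)
        (fun j _ => by positivity) (Finset.mem_univ i)

lemma integrableOn_bound (m : ℕ) (hm : 0 < m) :
    IntegrableOn (fun z : EuclideanSpace ℝ (Fin m) => ‖z‖ ^ 2 / ‖z‖ ^ (m + 1))
      (Metric.closedBall 0 1) volume := by
  haveI : Nonempty (Fin m) := ⟨⟨0, hm⟩⟩
  constructor
  · exact ((measurable_norm.pow_const 2).div (measurable_norm.pow_const (m + 1))).aestronglyMeasurable
  · rw [hasFiniteIntegral_iff_norm]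
    set f : EuclideanSpace ℝ (Fin m) → ℝ := fun z => ‖z‖ ^ 2 / ‖z‖ ^ (m + 1) with hf
    set A : ℕ → Set (EuclideanSpace ℝ (Fin m)) :=
      fun n => {z | ‖z‖ ≤ (1/2 : ℝ) ^ n ∧ (1/2 : ℝ) ^ (n + 1) < ‖z‖} with hA
    have hAmeas : ∀ n, MeasurableSet (A n) := fun n =>
      (measurable_norm measurableSet_Iic).inter (measurable_norm measurableSet_Ioi)
    have hsub : Metric.closedBall (0 : EuclideanSpace ℝ (Fin m)) 1 ⊆ {0} ∪ ⋃ n, A n := by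
      intro z hz
      rcases eq_or_ne z 0 with rfl | hz0
      · exact Or.inl rfl
      right
      rw [Metric.mem_closedBall, dist_zero_right] at hz
      have hzpos : 0 < ‖z‖ := norm_pos_iff.2 hz0
      have hex : ∃ n : ℕ, (1/2 : ℝ) ^ n < ‖z‖ := exists_pow_lt_of_lt_one hzpos (by norm_num)
      classical
      set k := Nat.find hex with hk
      have hk_spec : (1/2 : ℝ) ^ k < ‖z‖ := Nat.find_spec hex
      have hk_pos : k ≠ 0 := by
        intro h0
        rw [h0] at hk_spec
        simp at hk_spec
        linarith
      refine mem_iUnion.2 ⟨k - 1, ?_, ?_⟩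
      · have := Nat.find_min hex (m := k - 1) (Nat.pred_lt hk_pos)
        push_neg at this
        exact this
      · rw [Nat.sub_add_cancel (Nat.one_le_iff_ne_zero.2 hk_pos)]
        exact hk_spec
    calc ∫⁻ z in Metric.closedBall 0 1, ENNReal.ofReal ‖f z‖
        ≤ ∫⁻ z in ({0} ∪ ⋃ n, A n : Set (EuclideanSpace ℝ (Fin m))), ENNReal.ofReal ‖f z‖ :=
          lintegral_mono_set hsub
      _ ≤ (∫⁻ z in ({0} : Set (EuclideanSpace ℝ (Fin m))), ENNReal.ofReal ‖f z‖)
            + ∫⁻ z in (⋃ n, A n), ENNReal.ofReal ‖f z‖ := lintegral_union_le _ _ _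
      _ ≤ 0 + ∑' n, ∫⁻ z in A n, ENNReal.ofReal ‖f z‖ := by
          gcongr
          · rw [Measure.restrict_eq_zero.2 (measure_singleton 0)]
            simp
          · exact lintegral_iUnion_le _ _
      _ < ⊤ := by
          rw [zero_add]
          have hterm : ∀ n, (∫⁻ z in A n, ENNReal.ofReal ‖f z‖)
              ≤ ENNReal.ofReal (2 ^ (m + 1) * (1/2 : ℝ) ^ n)
                * volume (Metric.closedBall (0 : EuclideanSpace ℝ (Fin m)) 1) := by
            intro n
            set B : ℝ := ((1/2 : ℝ) ^ n) ^ 2 / ((1/2 : ℝ) ^ (n + 1)) ^ (m + 1) with hB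
            have hbound : ∀ z ∈ A n, ENNReal.ofReal ‖f z‖ ≤ ENNReal.ofReal B := by
              intro z hz
              obtain ⟨hz1, hz2⟩ := hz
              apply ENNReal.ofReal_le_ofReal
              rw [Real.norm_eq_abs, abs_of_nonneg (by positivity)]
              exact div_le_div₀ (by positivity) (pow_le_pow_left₀ (norm_nonneg z) hz1 2) (by positivity) (pow_le_pow_left₀ (by positivity) hz2.le (m + 1))
            calc ∫⁻ z in A n, ENNReal.ofReal ‖f z‖
                ≤ ∫⁻ _ in A n, ENNReal.ofReal B := setLIntegral_mono' (hAmeas n) hbound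
              _ = ENNReal.ofReal B * volume (A n) := setLIntegral_const _ _
              _ ≤ ENNReal.ofReal B
                    * volume (Metric.closedBall (0 : EuclideanSpace ℝ (Fin m)) ((1/2 : ℝ) ^ n)) := by
                  gcongr
                  intro z hz
                  rw [Metric.mem_closedBall, dist_zero_right]
                  exact hz.1
              _ = ENNReal.ofReal B * (ENNReal.ofReal (((1/2 : ℝ) ^ n) ^ m)
                    * volume (Metric.ball (0 : EuclideanSpace ℝ (Fin m)) 1)) := by
                  rw [Measure.addHaar_closedBall _ _ (by positivity)]
                  rw [finrank_euclideanSpace_fin]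
              _ ≤ ENNReal.ofReal B * (ENNReal.ofReal (((1/2 : ℝ) ^ n) ^ m)
                    * volume (Metric.closedBall (0 : EuclideanSpace ℝ (Fin m)) 1)) := by
                  gcongr
                  exact Metric.ball_subset_closedBall
              _ = ENNReal.ofReal (B * ((1/2 : ℝ) ^ n) ^ m)
                    * volume (Metric.closedBall (0 : EuclideanSpace ℝ (Fin m)) 1) := by
                  rw [← mul_assoc, ← ENNReal.ofReal_mul (by positivity)]
              _ ≤ ENNReal.ofReal (2 ^ (m + 1) * (1/2 : ℝ) ^ n)
                    * volume (Metric.closedBall (0 : EuclideanSpace ℝ (Fin m)) 1) := by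
                  refine mul_le_mul_left (ENNReal.ofReal_le_ofReal ?_) _
                  -- real inequality
                  rw [hB, div_mul_eq_mul_div, div_le_iff₀ (by positivity)]
                  have e1 : ((1/2 : ℝ) ^ n) ^ 2 * ((1/2 : ℝ) ^ n) ^ m
                      = (1/2 : ℝ) ^ (2 * n + n * m) := by
                    rw [← pow_mul, ← pow_mul, ← pow_add]; congr 1; ring
                  have e3 : n + (n + 1) * (m + 1) = (2 * n + n * m) + (m + 1) := by ring
                  have e2 : (2 : ℝ) ^ (m + 1) * (1/2 : ℝ) ^ n * ((1/2 : ℝ) ^ (n + 1)) ^ (m + 1)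
                      = (1/2 : ℝ) ^ (2 * n + n * m) := by
                    rw [← pow_mul, mul_assoc, ← pow_add, e3,
                      pow_add ((1/2 : ℝ)) (2 * n + n * m) (m + 1),
                      mul_comm ((1/2 : ℝ) ^ (2 * n + n * m)), ← mul_assoc, ← mul_pow]
                    norm_num
                  rw [e1, e2]
          set vol1 := volume (Metric.closedBall (0 : EuclideanSpace ℝ (Fin m)) 1) with hv
          calc (∑' n, ∫⁻ z in A n, ENNReal.ofReal ‖f z‖)
              ≤ ∑' n, ENNReal.ofReal (2 ^ (m + 1) * (1/2 : ℝ) ^ n) * vol1 :=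
                ENNReal.tsum_le_tsum hterm
            _ = (∑' n, ENNReal.ofReal (2 ^ (m + 1) * (1/2 : ℝ) ^ n)) * vol1 :=
                ENNReal.tsum_mul_right
            _ = (ENNReal.ofReal (2 ^ (m + 1)) * ∑' n : ℕ, (ENNReal.ofReal (1/2)) ^ n) * vol1 := by
                rw [← ENNReal.tsum_mul_left]
                congr 1
                refine tsum_congr fun n => ?_
                rw [ENNReal.ofReal_mul (by positivity), ENNReal.ofReal_pow (by norm_num : (0:ℝ) ≤ 1/2)]
            _ < ⊤ := by
                apply ENNReal.mul_lt_top
                · apply ENNReal.mul_lt_top ENNReal.ofReal_lt_top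
                  rw [ENNReal.tsum_geometric]
                  apply ENNReal.inv_lt_top.2
                  rw [tsub_pos_iff_lt]
                  exact ENNReal.ofReal_lt_one.2 (by norm_num)
                · exact measure_closedBall_lt_top

set_option maxHeartbeats 1000000 in
theorem stmt1 (m : ℕ) (hm : 0 < m) :
    ∃ c c' : ℝ, 0 < c ∧ 0 < c' ∧ ∀ t : ℝ, 0 < t → ∀ X : EuclideanSpace ℝ (Fin m),
      1 ≤ ‖X‖ → ‖X‖ ≤ 5 →
      |∫ z in {z : EuclideanSpace ℝ (Fin m) | ‖z‖ ≤ ‖X‖ / 10},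
          (z ⟨0, hm⟩ / ‖z‖ ^ (m + 1)) *
            (Real.exp (-‖X - z‖ ^ 2 / (4 * t)) - Real.exp (-‖X‖ ^ 2 / (4 * t)))| ≤
        c * Real.exp (-c' / t) := by
  set g : EuclideanSpace ℝ (Fin m) → ℝ := fun z => ‖z‖ ^ 2 / ‖z‖ ^ (m + 1) with hg
  have hgint := integrableOn_bound m hm
  obtain ⟨K, hK⟩ : ∃ K : ℝ,
      (∫ z in Metric.closedBall (0 : EuclideanSpace ℝ (Fin m)) 1, g z) = K := ⟨_, rfl⟩
  have hK0 : 0 ≤ K :=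
    hK ▸ setIntegral_nonneg measurableSet_closedBall (fun z _ => by positivity)
  refine ⟨28 * (K + 1), 81 / 800, by positivity, by norm_num, ?_⟩
  intro t ht X hX1 hX5
  set S : Set (EuclideanSpace ℝ (Fin m)) := {z | ‖z‖ ≤ ‖X‖ / 10} with hS
  have hSeq : S = Metric.closedBall 0 (‖X‖ / 10) := by
    ext z; simp [hS, mem_closedBall_zero_iff]
  have hSmeas : MeasurableSet S := hSeq ▸ measurableSet_closedBall
  have hSsub : S ⊆ Metric.closedBall 0 1 := by
    rw [hSeq]
    exact Metric.closedBall_subset_closedBall (by linarith)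
  set e1 : ℝ := Real.exp (-(81 / 800) / t) with he1
  set M : ℝ := (81 / 400) / t with hM
  have heM : Real.exp (-M) = e1 * e1 := by
    rw [hM, he1, ← Real.exp_add]
    congr 1
    field_simp
    ring
  set Ct : ℝ := 11 / (4 * t) * Real.exp (-M) with hCt
  have hCt0 : 0 ≤ Ct := by positivity
  -- pointwise bound
  have hb : ∀ z ∈ S, |(z ⟨0, hm⟩ / ‖z‖ ^ (m + 1)) *
      (Real.exp (-‖X - z‖ ^ 2 / (4 * t)) - Real.exp (-‖X‖ ^ 2 / (4 * t)))| ≤ Ct * g z := by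
    intro z hz
    have hz10 : ‖z‖ ≤ ‖X‖ / 10 := hz
    have hzhalf : ‖z‖ ≤ 1 / 2 := by linarith
    have h9 : (9 : ℝ) / 10 ≤ ‖X - z‖ := by
      have h1 := norm_sub_norm_le X z
      linarith
    have ha : M ≤ ‖X - z‖ ^ 2 / (4 * t) := by
      have hsq : (81 : ℝ) / 100 ≤ ‖X - z‖ ^ 2 := by nlinarith
      calc M = (81 / 100) / (4 * t) := by rw [hM]; ring
        _ ≤ ‖X - z‖ ^ 2 / (4 * t) := by gcongr
    have hbM : M ≤ ‖X‖ ^ 2 / (4 * t) := by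
      have hsq : (81 : ℝ) / 100 ≤ ‖X‖ ^ 2 := by nlinarith
      calc M = (81 / 100) / (4 * t) := by rw [hM]; ring
        _ ≤ ‖X‖ ^ 2 / (4 * t) := by gcongr
    have hinner := abs_real_inner_le_norm X z
    have hexp : ‖X - z‖ ^ 2 = ‖X‖ ^ 2 - 2 * (inner ℝ X z : ℝ) + ‖z‖ ^ 2 := norm_sub_sq_real X z
    have habs : |‖X - z‖ ^ 2 / (4 * t) - ‖X‖ ^ 2 / (4 * t)| ≤ 11 * ‖z‖ / (4 * t) := by
      rw [div_sub_div_same, abs_div, abs_of_pos (by positivity : (0:ℝ) < 4 * t)]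
      gcongr
      rw [hexp]
      have h1 := (abs_le.1 hinner).1
      have h2 := (abs_le.1 hinner).2
      have hzz : ‖z‖ * ‖z‖ ≤ ‖z‖ * (1 / 2) := mul_le_mul_of_nonneg_left hzhalf (norm_nonneg z)
      have hXz : ‖X‖ * ‖z‖ ≤ 5 * ‖z‖ := mul_le_mul_of_nonneg_right hX5 (norm_nonneg z)
      rw [abs_le]
      constructor <;> nlinarith [norm_nonneg z]
    have hE : |Real.exp (-‖X - z‖ ^ 2 / (4 * t)) - Real.exp (-‖X‖ ^ 2 / (4 * t))|
        ≤ 11 * ‖z‖ / (4 * t) * Real.exp (-M) := by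
      rw [neg_div, neg_div]
      exact (exp_diff_le ha hbM).trans
        (mul_le_mul_of_nonneg_right habs (Real.exp_nonneg _))
    have hz0 : |z ⟨0, hm⟩| ≤ ‖z‖ := coord_le_norm z _
    rcases eq_or_ne z 0 with rfl | hzne
    · have : (0 : EuclideanSpace ℝ (Fin m)) ⟨0, hm⟩ = 0 := rfl
      rw [this]
      simp [hg]
    · have hp : (0 : ℝ) < ‖z‖ ^ (m + 1) := by
        have := norm_pos_iff.2 hzne
        positivity
      rw [abs_mul, abs_div, abs_of_pos hp]
      calc |z ⟨0, hm⟩| / ‖z‖ ^ (m + 1) *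
            |Real.exp (-‖X - z‖ ^ 2 / (4 * t)) - Real.exp (-‖X‖ ^ 2 / (4 * t))|
          ≤ ‖z‖ / ‖z‖ ^ (m + 1) * (11 * ‖z‖ / (4 * t) * Real.exp (-M)) := by
            apply mul_le_mul (by gcongr) hE (abs_nonneg _) (by positivity)
        _ = Ct * g z := by
            rw [hCt, hg]
            field_simp
  -- integral bound
  have hGint : Integrable (fun z => Ct * g z) (volume.restrict S) :=
    (hgint.mono_set hSsub).const_mul Ct
  have hae : ∀ᵐ z ∂(volume.restrict S), ‖(z ⟨0, hm⟩ / ‖z‖ ^ (m + 1)) *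
      (Real.exp (-‖X - z‖ ^ 2 / (4 * t)) - Real.exp (-‖X‖ ^ 2 / (4 * t)))‖ ≤ Ct * g z := by
    rw [ae_restrict_iff' hSmeas]
    exact Eventually.of_forall fun z hz => by rw [Real.norm_eq_abs]; exact hb z hz
  have hmain := norm_integral_le_of_norm_le hGint hae
  rw [Real.norm_eq_abs] at hmain
  refine hmain.trans ?_
  have hsplit : ∫ z in S, Ct * g z = Ct * ∫ z in S, g z := integral_const_mul _ _
  rw [hsplit]
  have hmono : ∫ z in S, g z ≤ K := by
    rw [← hK]
    apply setIntegral_mono_set hgint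
    · exact Eventually.of_forall fun z => by positivity
    · exact HasSubset.Subset.eventuallyLE hSsub
  have he1pos : 0 < e1 := Real.exp_pos _
  have he1le : e1 ≤ 800 * t / 81 := by
    have hx : (81 / 800) / t ≤ Real.exp ((81 / 800) / t) := by
      have := Real.add_one_le_exp ((81 / 800) / t)
      linarith
    calc e1 = (Real.exp ((81 / 800) / t))⁻¹ := by rw [he1, neg_div, Real.exp_neg]
      _ ≤ ((81 / 800) / t)⁻¹ := inv_anti₀ (by positivity) hx
      _ = 800 * t / 81 := by rw [inv_div, div_div_eq_mul_div]; ring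
  calc Ct * ∫ z in S, g z ≤ Ct * K := mul_le_mul_of_nonneg_left hmono hCt0
    _ = (11 / (4 * t) * e1) * (e1 * K) := by rw [hCt, heM]; ring
    _ ≤ (2200 / 81) * (e1 * K) := by
        have h2 : 11 / (4 * t) * e1 ≤ 2200 / 81 := by
          rw [div_mul_eq_mul_div, div_le_div_iff₀ (by positivity) (by norm_num)]
          linarith
        exact mul_le_mul_of_nonneg_right h2 (mul_nonneg he1pos.le hK0)
    _ ≤ 28 * (e1 * K) :=
        mul_le_mul_of_nonneg_right (by norm_num) (mul_nonneg he1pos.le hK0)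
    _ = (28 * K) * e1 := by ring
    _ ≤ (28 * (K + 1)) * e1 := mul_le_mul_of_nonneg_right (by linarith) he1pos.le
    _ = 28 * (K + 1) * Real.exp (-(81 / 800) / t) := by rw [he1]
end

section
/- There exists a constant c > 0 such that for all x > 0 and t > 0, ∫₀ᵗ u^{−1} e^{−x²/(4u)} | 1 − x²/u | du ≤ c · ( 1 + | log(x²/t) | ). -/
open MeasureTheory Real Set

lemma eb1 {z : ℝ} (hz : 0 < z) : Real.exp (-z) ≤ z⁻¹ := by
  rw [Real.exp_neg]
  exact inv_anti₀ hz (by linarith [Real.add_one_le_exp z])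

lemma eb3 {z : ℝ} (hz : 0 < z) : Real.exp (-z) ≤ 27 / z ^ 3 := by
  have h : z ^ 3 / 27 ≤ Real.exp z := by
    have h1 : z / 3 ≤ Real.exp (z / 3) := by linarith [Real.add_one_le_exp (z/3)]
    have h2 : (z / 3) ^ 3 ≤ (Real.exp (z / 3)) ^ 3 :=
      pow_le_pow_left₀ (by positivity) h1 3
    calc z ^ 3 / 27 = (z / 3) ^ 3 := by ring
      _ ≤ (Real.exp (z / 3)) ^ 3 := h2
      _ = Real.exp z := by rw [← Real.exp_nat_mul, show (3:ℕ) * (z/3) = z by ring]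
  rw [Real.exp_neg, inv_eq_one_div, div_le_div_iff₀ (Real.exp_pos z) (by positivity)]
  nlinarith [Real.exp_pos z]

lemma absb {b u : ℝ} (hb : 0 < b) (hu : 0 < u) : |1 - 4*b/u| ≤ 1 + 4*b/u := by
  have h : (0:ℝ) ≤ 4*b/u := by positivity
  rw [abs_sub_comm]
  calc |4*b/u - 1| ≤ |4*b/u| + |(1:ℝ)| := abs_sub _ _
    _ = 4*b/u + 1 := by rw [abs_of_nonneg h, abs_one]
    _ = 1 + 4*b/u := by ring

lemma P1 {b u : ℝ} (hb : 0 < b) (hu : 0 < u) :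
    u⁻¹ * Real.exp (-(b/u)) * |1 - 4*b/u| ≤ b⁻¹ + 108*u/b^2 := by
  have hz : 0 < b / u := by positivity
  have h1 : u⁻¹ * Real.exp (-(b/u)) ≤ b⁻¹ := by
    have := eb1 hz
    calc u⁻¹ * Real.exp (-(b/u)) ≤ u⁻¹ * (b/u)⁻¹ := by
          apply mul_le_mul_of_nonneg_left this (by positivity)
      _ = b⁻¹ * (u / u) := by field_simp
      _ = b⁻¹ := by rw [div_self hu.ne']; ring
  have h2 : u⁻¹ * Real.exp (-(b/u)) * (4*b/u) ≤ 108*u/b^2 := by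
    have := eb3 hz
    calc u⁻¹ * Real.exp (-(b/u)) * (4*b/u)
        ≤ u⁻¹ * (27 / (b/u)^3) * (4*b/u) := by
          apply mul_le_mul_of_nonneg_right _ (by positivity)
          exact mul_le_mul_of_nonneg_left this (by positivity)
      _ = 108*u/b^2 * ((u/u)^3 * (u/u)) := by field_simp; ring
      _ = 108*u/b^2 := by rw [div_self hu.ne']; ring
  calc u⁻¹ * Real.exp (-(b/u)) * |1 - 4*b/u|
      ≤ u⁻¹ * Real.exp (-(b/u)) * (1 + 4*b/u) := by
        apply mul_le_mul_of_nonneg_left (absb hb hu) (by positivity)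
    _ = u⁻¹ * Real.exp (-(b/u)) + u⁻¹ * Real.exp (-(b/u)) * (4*b/u) := by ring
    _ ≤ b⁻¹ + 108*u/b^2 := add_le_add h1 h2

lemma P2 {b u : ℝ} (hb : 0 < b) (hu : 0 < u) :
    u⁻¹ * Real.exp (-(b/u)) * |1 - 4*b/u| ≤ u⁻¹ + 4*b/u^2 := by
  have he : Real.exp (-(b/u)) ≤ 1 := by
    apply Real.exp_le_one_iff.mpr; simp; positivity
  calc u⁻¹ * Real.exp (-(b/u)) * |1 - 4*b/u|
      ≤ u⁻¹ * Real.exp (-(b/u)) * (1 + 4*b/u) := by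
        apply mul_le_mul_of_nonneg_left (absb hb hu) (by positivity)
    _ ≤ u⁻¹ * 1 * (1 + 4*b/u) := by
        apply mul_le_mul_of_nonneg_right _ (by positivity)
        exact mul_le_mul_of_nonneg_left he (by positivity)
    _ = u⁻¹ + 4*b/u^2 := by field_simp

lemma int1 (b s : ℝ) (hb : 0 < b) (hs : 0 < s) :
    ∫ u in Ioc (0:ℝ) s, (b⁻¹ + 108*u/b^2) = s * b⁻¹ + 108/b^2 * (s^2/2) := by
  rw [← intervalIntegral.integral_of_le hs.le]
  have : ∀ u : ℝ, b⁻¹ + 108*u/b^2 = b⁻¹ + (108/b^2) * u := by intro u; ring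
  simp_rw [this]
  rw [intervalIntegral.integral_add (intervalIntegrable_const)
    ((intervalIntegral.intervalIntegrable_id).const_mul _),
    intervalIntegral.integral_const, intervalIntegral.integral_const_mul,
    integral_id]
  simp

lemma intg2 (b t : ℝ) (hb : 0 < b) (hbt : b ≤ t) :
    IntervalIntegrable (fun u : ℝ => u⁻¹ + 4*b/u^2) volume b t := by
  have hne : ∀ u ∈ Set.uIcc b t, u ≠ 0 := by
    intro u hu
    rw [Set.uIcc_of_le hbt] at hu
    exact (lt_of_lt_of_le hb hu.1).ne'
  apply ContinuousOn.intervalIntegrable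
  intro u hu
  exact ((continuousAt_inv₀ (hne u hu)).add
    ((continuousAt_const.div (continuousAt_pow u 2) (pow_ne_zero 2 (hne u hu))))).continuousWithinAt

lemma int2 (b t : ℝ) (hb : 0 < b) (hbt : b ≤ t) :
    ∫ u in Ioc b t, (u⁻¹ + 4*b/u^2) = (Real.log t - Real.log b) + 4*b*(b⁻¹ - t⁻¹) := by
  have ht : 0 < t := lt_of_lt_of_le hb hbt
  rw [← intervalIntegral.integral_of_le hbt]
  have hne : ∀ u ∈ Set.uIcc b t, u ≠ 0 := by
    intro u hu
    rw [Set.uIcc_of_le hbt] at hu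
    exact (lt_of_lt_of_le hb hu.1).ne'
  have h1 : IntervalIntegrable (fun u : ℝ => u⁻¹) volume b t := by
    apply ContinuousOn.intervalIntegrable
    exact fun u hu => (continuousAt_inv₀ (hne u hu)).continuousWithinAt
  have h2 : IntervalIntegrable (fun u : ℝ => 4*b/u^2) volume b t := by
    apply ContinuousOn.intervalIntegrable
    intro u hu
    exact ((continuousAt_const.div (continuousAt_pow u 2) (pow_ne_zero 2 (hne u hu)))).continuousWithinAt
  rw [intervalIntegral.integral_add h1 h2]
  congr 1
  · rw [integral_inv_of_pos hb ht, Real.log_div ht.ne' hb.ne']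
  · have : ∀ u ∈ Set.uIcc b t, HasDerivAt (fun y : ℝ => -(4*b)*y⁻¹) (4*b/u^2) u := by
      intro u hu
      have : HasDerivAt (fun y : ℝ => -(4*b)*y⁻¹) (-(4*b) * -(u^2)⁻¹) u :=
        (hasDerivAt_inv (hne u hu)).const_mul (-(4*b))
      convert this using 1
      ring
    rw [intervalIntegral.integral_eq_sub_of_hasDerivAt this h2]
    ring

theorem stmt5 :
    ∃ c : ℝ, 0 < c ∧ ∀ x t : ℝ, 0 < x → 0 < t →
      (∫ u in Ioo (0 : ℝ) t, u⁻¹ * Real.exp (-x ^ 2 / (4 * u)) * |1 - x ^ 2 / u|) ≤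
        c * (1 + |Real.log (x ^ 2 / t)|) := by
  refine ⟨64, by norm_num, fun x t hx ht => ?_⟩
  set b : ℝ := x^2/4 with hbdef
  have hb : 0 < b := by positivity
  have key : ∀ u : ℝ, u⁻¹ * Real.exp (-x ^ 2 / (4 * u)) * |1 - x ^ 2 / u|
      = u⁻¹ * Real.exp (-(b/u)) * |1 - 4*b/u| := by
    intro u
    have e1 : -x ^ 2 / (4 * u) = -(b/u) := by rw [hbdef]; ring
    have e2 : x ^ 2 / u = 4*b/u := by rw [hbdef]; ring
    rw [e1, e2]
  simp_rw [key]
  have hL : 0 ≤ |Real.log (x ^ 2 / t)| := abs_nonneg _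
  have hf0 : 0 ≤ᵐ[volume.restrict (Ioo (0:ℝ) t)]
      fun u => u⁻¹ * Real.exp (-(b/u)) * |1 - 4*b/u| := by
    refine (ae_restrict_iff' measurableSet_Ioo).mpr (ae_of_all _ fun u hu => ?_)
    have hu0 := hu.1
    positivity
  rcases le_or_gt t b with hcase | hcase
  · -- t ≤ b : bound by b⁻¹ + 108 u / b²
    have hgint : IntegrableOn (fun u : ℝ => b⁻¹ + 108*u/b^2) (Ioo 0 t) := by
      have hcont : Continuous (fun u : ℝ => b⁻¹ + 108*u/b^2) := by continuity
      exact hcont.integrableOn_Ioc.mono_set Ioo_subset_Ioc_self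
    have hle : (fun u : ℝ => u⁻¹ * Real.exp (-(b/u)) * |1 - 4*b/u|)
        ≤ᵐ[volume.restrict (Ioo (0:ℝ) t)] fun u => b⁻¹ + 108*u/b^2 := by
      refine (ae_restrict_iff' measurableSet_Ioo).mpr (ae_of_all _ fun u hu => ?_)
      exact P1 hb hu.1
    calc (∫ u in Ioo (0:ℝ) t, u⁻¹ * Real.exp (-(b/u)) * |1 - 4*b/u|)
        ≤ ∫ u in Ioo (0:ℝ) t, (b⁻¹ + 108*u/b^2) :=
          integral_mono_of_nonneg hf0 hgint hle
      _ = t * b⁻¹ + 108/b^2 * (t^2/2) := by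
          rw [← integral_Ioc_eq_integral_Ioo]; exact int1 b t hb ht
      _ ≤ 55 := by
          have e1 : t * b⁻¹ ≤ 1 := by
            rw [← div_eq_mul_inv]; exact (div_le_one hb).mpr hcase
          have e2 : 108/b^2 * (t^2/2) ≤ 54 := by
            have h2 : t^2 ≤ b^2 := pow_le_pow_left₀ ht.le hcase 2
            have : 108/b^2 * (t^2/2) = 54 * (t^2/b^2) := by ring
            rw [this]
            have : t^2/b^2 ≤ 1 := (div_le_one (by positivity)).mpr h2
            linarith
          linarith
      _ ≤ 64 * (1 + |Real.log (x ^ 2 / t)|) := by nlinarith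
  · -- b < t : piecewise bound
    set g : ℝ → ℝ := fun u => if u ≤ b then b⁻¹ + 108*u/b^2 else u⁻¹ + 4*b/u^2 with hgdef
    have hg1 : IntegrableOn g (Ioc 0 b) := by
      have : IntegrableOn (fun u : ℝ => b⁻¹ + 108*u/b^2) (Ioc 0 b) := by
        apply Continuous.integrableOn_Ioc
        continuity
      exact this.congr_fun (fun u hu => (if_pos hu.2).symm) measurableSet_Ioc
    have hg2 : IntegrableOn g (Ioc b t) := by
      have : IntegrableOn (fun u : ℝ => u⁻¹ + 4*b/u^2) (Ioc b t) :=
        (intg2 b t hb hcase.le).1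
      exact this.congr_fun (fun u hu => (if_neg (not_le.mpr hu.1)).symm) measurableSet_Ioc
    have hgint : IntegrableOn g (Ioo 0 t) := by
      apply (hg1.union hg2).mono_set
      rw [Ioc_union_Ioc_eq_Ioc hb.le hcase.le]
      exact Ioo_subset_Ioc_self
    have hle : (fun u : ℝ => u⁻¹ * Real.exp (-(b/u)) * |1 - 4*b/u|)
        ≤ᵐ[volume.restrict (Ioo (0:ℝ) t)] g := by
      refine (ae_restrict_iff' measurableSet_Ioo).mpr (ae_of_all _ fun u hu => ?_)
      by_cases h : u ≤ b
      · rw [hgdef]; simp only [if_pos h]; exact P1 hb hu.1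
      · rw [hgdef]; simp only [if_neg h]; exact P2 hb hu.1
    have hsplit : (∫ u in Ioo (0:ℝ) t, g u)
        = (∫ u in Ioc (0:ℝ) b, g u) + ∫ u in Ioc b t, g u := by
      rw [← integral_Ioc_eq_integral_Ioo, ← Ioc_union_Ioc_eq_Ioc hb.le hcase.le,
        setIntegral_union (Ioc_disjoint_Ioc_of_le le_rfl) measurableSet_Ioc hg1 hg2]
    have hv1 : (∫ u in Ioc (0:ℝ) b, g u) = 55 := by
      rw [setIntegral_congr_fun measurableSet_Ioc (fun u hu => if_pos hu.2),
        int1 b b hb hb]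
      field_simp
      ring
    have hv2 : (∫ u in Ioc b t, g u) = (Real.log t - Real.log b) + 4*b*(b⁻¹ - t⁻¹) := by
      rw [setIntegral_congr_fun measurableSet_Ioc (fun u hu => if_neg (not_le.mpr hu.1))]
      exact int2 b t hb hcase.le
    have hlogb : Real.log b = Real.log (x^2) - Real.log 4 := by
      rw [hbdef, Real.log_div (by positivity) (by norm_num)]
    have hlogxt : Real.log (x^2/t) = Real.log (x^2) - Real.log t :=
      Real.log_div (by positivity) ht.ne'
    have h4 : Real.log 4 ≤ 3 := by
      linarith [Real.log_le_sub_one_of_pos (show (0:ℝ) < 4 by norm_num)]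
    have habs : -Real.log (x^2/t) ≤ |Real.log (x^2/t)| := neg_le_abs _
    have hbt4 : 4*b*(b⁻¹ - t⁻¹) ≤ 4 := by
      have h1 : 0 < t⁻¹ := by positivity
      have : 4*b*(b⁻¹ - t⁻¹) ≤ 4*b*b⁻¹ := by nlinarith
      rw [show 4*b*b⁻¹ = 4*(b*b⁻¹) by ring, mul_inv_cancel₀ hb.ne'] at this
      linarith
    calc (∫ u in Ioo (0:ℝ) t, u⁻¹ * Real.exp (-(b/u)) * |1 - 4*b/u|)
        ≤ ∫ u in Ioo (0:ℝ) t, g u := integral_mono_of_nonneg hf0 hgint hle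
      _ = 55 + ((Real.log t - Real.log b) + 4*b*(b⁻¹ - t⁻¹)) := by
          rw [hsplit, hv1, hv2]
      _ ≤ 64 * (1 + |Real.log (x ^ 2 / t)|) := by
          have : Real.log t - Real.log b ≤ |Real.log (x^2/t)| + 3 := by
            rw [hlogb]
            have : Real.log t - (Real.log (x^2) - Real.log 4)
                = -(Real.log (x^2) - Real.log t) + Real.log 4 := by ring
            rw [this, ← hlogxt]
            linarith
          nlinarith
end

section
/- Let 1 < p < ∞ and define H(x, τ) = (4πτ)^{−1/2} e^{−x²/(4τ)} ( x²/(4τ²) − 1/(2τ) ) for x ∈ ℝ and τ > 0 (this is the second spatial derivative ∂²ₓΓ₁ of the one-dimensional heat kernel Γ₁(x,τ) = (4πτ)^{−1/2} e^{−x²/(4τ)}). There exists a constant c > 0 such that for every M ≥ 0 and every measurable function g : ℝ → ℝ with |g| ≤ M almost everywhere and g supported in the interval (3/4, 7/8), both of the following hold: (i) ∫₁^∞ ∫₀^∞ | ∫₀ᵗ H(x, t−s) g(s) ds |^p dx dt ≤ c · M^p (outer integral in t over (1, ∞), inner in x over (0, ∞)); (ii) ∫₁^∞ ∫₀^∞ |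 ∫₀ᵗ H(x, t−s) g(s) ds |^p dt dx ≤ c · M^p (outer integral in x over (1, ∞), inner in t over (0, ∞)). -/
open MeasureTheory Real Set

/-- `H x τ = ∂²ₓ Γ₁(x,τ)` where `Γ₁` is the one-dimensional heat kernel. -/
noncomputable def heatKernelD2 (x τ : ℝ) : ℝ :=
  (Real.sqrt (4 * π * τ))⁻¹ * Real.exp (-x ^ 2 / (4 * τ)) *
    (x ^ 2 / (4 * τ ^ 2) - 1 / (2 * τ))

lemma exp_cubic {y : ℝ} (hy : 0 ≤ y) : 1 + y + y^2/2 + y^3/6 ≤ Real.exp y := by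
  have := Real.sum_le_exp_of_nonneg hy 4
  simp [Finset.sum_range_succ, Nat.factorial] at this
  nlinarith [this]

lemma one_le_sqrt_pi : (1:ℝ) ≤ Real.sqrt π := by
  rw [show (1:ℝ) = Real.sqrt 1 by simp]
  exact Real.sqrt_le_sqrt (by linarith [Real.pi_gt_three])

lemma hk_zero (x τ : ℝ) (h : τ ≤ 0) : heatKernelD2 x τ = 0 := by
  unfold heatKernelD2
  rcases lt_or_eq_of_le h with h' | h'
  · rw [Real.sqrt_eq_zero_of_nonpos (by nlinarith [Real.pi_pos])]
    simp
  · rw [h']; norm_num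

lemma hk_master (x τ : ℝ) (hτ : 0 < τ) :
    |heatKernelD2 x τ| ≤
      Real.exp (-(x^2/(4*τ))) * (x^2/(4*τ) + 1/2) / (2 * Real.sqrt π * (Real.sqrt τ * τ)) := by
  have hsp : 0 < Real.sqrt π := Real.sqrt_pos.2 Real.pi_pos
  have hst : 0 < Real.sqrt τ := Real.sqrt_pos.2 hτ
  have h4 : Real.sqrt (4 * π * τ) = 2 * Real.sqrt π * Real.sqrt τ := by
    rw [show 4 * π * τ = (2 * Real.sqrt π * Real.sqrt τ)^2 by
      rw [mul_pow, mul_pow, Real.sq_sqrt Real.pi_pos.le, Real.sq_sqrt hτ.le]; ring]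
    exact Real.sqrt_sq (by positivity)
  unfold heatKernelD2
  rw [h4, abs_mul, abs_mul]
  have e1 : |(2 * Real.sqrt π * Real.sqrt τ)⁻¹| = (2 * Real.sqrt π * Real.sqrt τ)⁻¹ := by
    rw [abs_of_nonneg]; positivity
  have e2 : |Real.exp (-x ^ 2 / (4 * τ))| = Real.exp (-(x^2/(4*τ))) := by
    rw [abs_of_nonneg (Real.exp_nonneg _)]; ring_nf
  have e3 : |x ^ 2 / (4 * τ ^ 2) - 1 / (2 * τ)| ≤ (x^2/(4*τ) + 1/2) / τ := by
    rw [abs_sub_comm]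
    refine (abs_sub _ _).trans ?_
    rw [abs_of_nonneg (by positivity), abs_of_nonneg (by positivity)]
    apply le_of_eq
    field_simp
    ring
  rw [e1, e2]
  calc (2 * Real.sqrt π * Real.sqrt τ)⁻¹ * Real.exp (-(x^2/(4*τ))) * |x ^ 2 / (4 * τ ^ 2) - 1 / (2 * τ)|
      ≤ (2 * Real.sqrt π * Real.sqrt τ)⁻¹ * Real.exp (-(x^2/(4*τ))) * ((x^2/(4*τ) + 1/2) / τ) := by
        apply mul_le_mul_of_nonneg_left e3 (by positivity)
    _ = Real.exp (-(x^2/(4*τ))) * (x^2/(4*τ) + 1/2) / (2 * Real.sqrt π * (Real.sqrt τ * τ)) := by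
        field_simp

section bounds
variable {x τ : ℝ} (hτ : 0 < τ)

lemma hk_bound1 (x : ℝ) (hτ : 0 < τ) : |heatKernelD2 x τ| ≤ 1 / (Real.sqrt τ * τ) := by
  refine (hk_master x τ hτ).trans ?_
  set u := x^2/(4*τ) with hu
  have hu0 : 0 ≤ u := by positivity
  have hE : 1 + u ≤ Real.exp u := by nlinarith [exp_cubic hu0]
  have hEpos : 0 < Real.exp u := Real.exp_pos u
  have hst : 0 < Real.sqrt τ := Real.sqrt_pos.2 hτ
  have hsp := one_le_sqrt_pi
  rw [Real.exp_neg, div_le_div_iff₀ (by positivity) (by positivity)]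
  have h1 : (Real.exp u)⁻¹ * (u + 1/2) ≤ 2 * Real.sqrt π := by
    rw [inv_mul_le_iff₀ hEpos]
    nlinarith
  calc (Real.exp u)⁻¹ * (u + 1/2) * (Real.sqrt τ * τ)
      ≤ 2 * Real.sqrt π * (Real.sqrt τ * τ) := by
        apply mul_le_mul_of_nonneg_right h1 (by positivity)
    _ = 1 * (2 * Real.sqrt π * (Real.sqrt τ * τ)) := by ring

lemma sq_le_imp {a b : ℝ} (ha : 0 ≤ a) (hb : 0 ≤ b) (h : a^2 ≤ b^2) : a ≤ b := by
  nlinarith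

lemma hk_bound2 (hτ : 0 < τ) (hx : 0 < x) : |heatKernelD2 x τ| ≤ 2 / (τ * x) := by
  refine (hk_master x τ hτ).trans ?_
  set u := x^2/(4*τ) with hu
  have hu0 : 0 ≤ u := by positivity
  have hx2 : x^2 = 4*u*τ := by rw [hu]; field_simp
  have hE := exp_cubic hu0
  have hEpos : 0 < Real.exp u := Real.exp_pos u
  have hst : 0 < Real.sqrt τ := Real.sqrt_pos.2 hτ
  have hsp := one_le_sqrt_pi
  have hspi : 0 < Real.sqrt π := lt_of_lt_of_le one_pos hsp
  rw [Real.exp_neg, div_le_div_iff₀ (by positivity) (by positivity)]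
  -- suffices : x * ((exp u)⁻¹ * (u+1/2)) ≤ 4 √π √τ
  have key : x * ((Real.exp u)⁻¹ * (u + 1/2)) ≤ 4 * Real.sqrt π * Real.sqrt τ := by
    apply sq_le_imp (by positivity) (by positivity)
    have hxe : (x * ((Real.exp u)⁻¹ * (u + 1/2)))^2 = (4*u*τ) * ((u+1/2)^2 / (Real.exp u)^2) := by
      rw [mul_pow, hx2]; ring
    have hrhs : (4 * Real.sqrt π * Real.sqrt τ)^2 = 16 * π * τ := by
      rw [mul_pow, mul_pow, Real.sq_sqrt Real.pi_pos.le, Real.sq_sqrt hτ.le]; ring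
    rw [hxe, hrhs]
    have hpoly : u * (u + 1/2)^2 ≤ 4 * π * (Real.exp u)^2 := by
      have hQ : 1 + u + u^2/2 ≤ Real.exp u := by nlinarith
      have h2 : (1 + u + u^2/2)^2 ≤ (Real.exp u)^2 := by
        apply pow_le_pow_left₀ (by positivity) hQ
      nlinarith [Real.pi_gt_three, sq_nonneg u, sq_nonneg (Real.exp u), h2]
    calc 4*u*τ * ((u+1/2)^2 / (Real.exp u)^2)
        = (u * (u+1/2)^2) / (Real.exp u)^2 * (4 * τ) := by ring
      _ ≤ (4 * π * (Real.exp u)^2) / (Real.exp u)^2 * (4 * τ) := by gcongr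
      _ = 16 * π * τ := by field_simp; ring
  calc (Real.exp u)⁻¹ * (u + 1/2) * (τ * x)
      = (x * ((Real.exp u)⁻¹ * (u + 1/2))) * τ := by ring
    _ ≤ (4 * Real.sqrt π * Real.sqrt τ) * τ := mul_le_mul_of_nonneg_right key hτ.le
    _ = 2 * (2 * Real.sqrt π * (Real.sqrt τ * τ)) := by ring

lemma hk_bound3 (hτ : 0 < τ) (hx : 0 < x) : |heatKernelD2 x τ| ≤ 40 / x^3 := by
  refine (hk_master x τ hτ).trans ?_
  set u := x^2/(4*τ) with hu
  have hu0 : 0 ≤ u := by positivity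
  have hx2 : x^2 = 4*u*τ := by rw [hu]; field_simp
  have hE := exp_cubic hu0
  have hEpos : 0 < Real.exp u := Real.exp_pos u
  have hst : 0 < Real.sqrt τ := Real.sqrt_pos.2 hτ
  have hsp := one_le_sqrt_pi
  have hspi : 0 < Real.sqrt π := lt_of_lt_of_le one_pos hsp
  rw [Real.exp_neg, div_le_div_iff₀ (by positivity) (by positivity)]
  have key : x^3 * ((Real.exp u)⁻¹ * (u + 1/2)) ≤ 80 * Real.sqrt π * (Real.sqrt τ * τ) := by
    apply sq_le_imp (by positivity) (by positivity)
    have hxe : (x^3 * ((Real.exp u)⁻¹ * (u + 1/2)))^2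
        = (4*u*τ)^3 * ((u+1/2)^2 / (Real.exp u)^2) := by
      rw [mul_pow, show (x^3)^2 = (x^2)^3 by ring, hx2]; ring
    have hrhs : (80 * Real.sqrt π * (Real.sqrt τ * τ))^2 = 6400 * π * τ^3 := by
      rw [mul_pow, mul_pow, mul_pow, Real.sq_sqrt Real.pi_pos.le, Real.sq_sqrt hτ.le]; ring
    rw [hxe, hrhs]
    have hpoly : u^3 * (u + 1/2)^2 ≤ 100 * π * (Real.exp u)^2 := by
      have h2 : (1 + u + u^2/2 + u^3/6)^2 ≤ (Real.exp u)^2 := by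
        apply pow_le_pow_left₀ (by positivity) hE
      nlinarith [Real.pi_gt_three, sq_nonneg (Real.exp u), h2, hu0,
        pow_nonneg hu0 3, pow_nonneg hu0 4, pow_nonneg hu0 5, pow_nonneg hu0 6]
    calc (4*u*τ)^3 * ((u+1/2)^2 / (Real.exp u)^2)
        = (u^3 * (u+1/2)^2) / (Real.exp u)^2 * (64 * τ^3) := by ring
      _ ≤ (100 * π * (Real.exp u)^2) / (Real.exp u)^2 * (64 * τ^3) := by gcongr
      _ = 6400 * π * τ^3 := by field_simp; ring
  calc (Real.exp u)⁻¹ * (u + 1/2) * x^3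
      = x^3 * ((Real.exp u)⁻¹ * (u + 1/2)) := by ring
    _ ≤ 80 * Real.sqrt π * (Real.sqrt τ * τ) := key
    _ = 40 * (2 * Real.sqrt π * (Real.sqrt τ * τ)) := by ring
end bounds

lemma F_bound {M : ℝ} (hM : 0 ≤ M) {g : ℝ → ℝ}
    (hgb : ∀ᵐ s ∂(volume : Measure ℝ), |g s| ≤ M)
    (hgs : Function.support g ⊆ Ioo (3 / 4 : ℝ) (7 / 8))
    {x t B : ℝ} (hB : 0 ≤ B)
    (hHB : ∀ s ∈ Ioo (3/4 : ℝ) (7/8), s < t → |heatKernelD2 x (t - s)| ≤ B) :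
    |∫ s in Ioo (0 : ℝ) t, heatKernelD2 x (t - s) * g s| ≤ M * B := by
  have key : ∀ᵐ s ∂(volume.restrict (Ioo (0:ℝ) t)),
      ENNReal.ofReal ‖heatKernelD2 x (t - s) * g s‖ ≤
        (Ioo (3/4 : ℝ) (7/8)).indicator (fun _ => ENNReal.ofReal (M * B)) s := by
    refine ae_restrict_of_ae (hgb.mono fun s hs => ?_)
    by_cases hmem : s ∈ Ioo (3/4 : ℝ) (7/8)
    · rw [indicator_of_mem hmem]
      apply ENNReal.ofReal_le_ofReal
      rw [norm_mul, Real.norm_eq_abs, Real.norm_eq_abs]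
      by_cases hst : s < t
      · calc |heatKernelD2 x (t-s)| * |g s| ≤ B * M :=
            mul_le_mul (hHB s hmem hst) hs (abs_nonneg _) hB
          _ = M * B := mul_comm _ _
      · rw [hk_zero x (t - s) (by linarith [not_lt.1 hst])]
        simp [mul_nonneg hM hB]
    · have : g s = 0 := by
        by_contra h
        exact hmem (hgs (Function.mem_support.2 h))
      simp [this, indicator_nonneg (fun _ _ => zero_le)]
  have h1 : |∫ s in Ioo (0 : ℝ) t, heatKernelD2 x (t - s) * g s|
      ≤ (∫⁻ s in Ioo (0:ℝ) t, ENNReal.ofReal ‖heatKernelD2 x (t - s) * g s‖).toReal := by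
    rw [← Real.norm_eq_abs]
    exact norm_integral_le_lintegral_norm _
  refine h1.trans ?_
  have h2 : (∫⁻ s in Ioo (0:ℝ) t, ENNReal.ofReal ‖heatKernelD2 x (t - s) * g s‖)
      ≤ ENNReal.ofReal (M * B) := by
    refine (lintegral_mono_ae key).trans ?_
    rw [lintegral_indicator measurableSet_Ioo, setLIntegral_const]
    calc ENNReal.ofReal (M*B) * (volume.restrict (Ioo (0:ℝ) t)) (Ioo (3/4:ℝ) (7/8))
        ≤ ENNReal.ofReal (M*B) * 1 := by
          apply mul_le_mul_right
          refine le_trans (Measure.restrict_le_self _) ?_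
          rw [Real.volume_Ioo]
          exact ENNReal.ofReal_le_one.2 (by norm_num)
      _ = ENNReal.ofReal (M*B) := mul_one _
  calc (∫⁻ s in Ioo (0:ℝ) t, ENNReal.ofReal ‖heatKernelD2 x (t - s) * g s‖).toReal
      ≤ (ENNReal.ofReal (M*B)).toReal := ENNReal.toReal_mono ENNReal.ofReal_ne_top h2
    _ = M * B := ENNReal.toReal_ofReal (mul_nonneg hM hB)

lemma lint_rpow {q a : ℝ} (hq : q < -1) (ha : 0 < a) :
    ∫⁻ y in Ioi a, ENNReal.ofReal (y ^ q) = ENNReal.ofReal (-a ^ (q+1) / (q+1)) := by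
  rw [← integral_Ioi_rpow_of_lt hq ha]
  rw [← ofReal_integral_eq_lintegral_ofReal (integrableOn_Ioi_rpow_of_lt hq ha)]
  filter_upwards [ae_restrict_mem measurableSet_Ioi] with y hy
  exact Real.rpow_nonneg (le_of_lt (ha.trans hy)) q

lemma lint_tail {a K pq : ℝ} (hq : pq < -1) (ha : 0 < a) (hK : 0 ≤ K) :
    ∫⁻ y in Ioi a, ENNReal.ofReal (K * y ^ pq)
      = ENNReal.ofReal (K * (-a ^ (pq+1) / (pq+1))) := by
  simp_rw [ENNReal.ofReal_mul hK]
  rw [lintegral_const_mul' _ _ ENNReal.ofReal_ne_top, lint_rpow hq ha,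
    ← ENNReal.ofReal_mul hK]

lemma t1eq {t M pp : ℝ} (ht : 0 < t) (hM : 0 ≤ M) :
    (M*(23/(Real.sqrt t*t)))^pp * Real.sqrt t = M^pp * 23^pp * t ^ ((1-3*pp)/2) := by
  have h2 : Real.sqrt t = t ^ ((1:ℝ)/2) := Real.sqrt_eq_rpow t
  have h32 : Real.sqrt t * t = t ^ ((3:ℝ)/2) := by
    rw [h2, show (3:ℝ)/2 = 1/2+1 by norm_num, Real.rpow_add ht, Real.rpow_one]
  rw [h32, h2, Real.mul_rpow hM (by positivity),
    Real.div_rpow (by norm_num : (0:ℝ) ≤ 23) (Real.rpow_nonneg ht.le _),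
    ← Real.rpow_mul ht.le, div_eq_mul_inv, ← Real.rpow_neg ht.le,
    show (1-3*pp)/2 = -(3/2*pp) + 1/2 by ring, Real.rpow_add ht]
  ring

lemma t2eq {t M pp : ℝ} (ht : 0 < t) (hM : 0 ≤ M) (hp : 1 < pp) :
    (16*M/t)^pp * (-(Real.sqrt t)^(-pp+1)/(-pp+1))
      = M^pp * 16^pp * (1/(pp-1)) * t ^ ((1-3*pp)/2) := by
  have h2 : Real.sqrt t = t ^ ((1:ℝ)/2) := Real.sqrt_eq_rpow t
  have hne : pp - 1 ≠ 0 := by linarith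
  have hne2 : 1 - pp ≠ 0 := by linarith
  have hdiv : ∀ z : ℝ, -z/(-pp+1) = z * (1/(pp-1)) := fun z => by
    field_simp
    linear_combination z * mul_inv_cancel₀ hne2
  rw [hdiv, h2, Real.div_rpow (by positivity) ht.le, Real.mul_rpow (by norm_num : (0:ℝ) ≤ 16) hM,
    ← Real.rpow_mul ht.le, div_eq_mul_inv (16^pp*M^pp), ← Real.rpow_neg ht.le,
    show (1-3*pp)/2 = -pp + 1/2*(-pp+1) by ring, Real.rpow_add ht]
  ring

lemma x1eq {x M pp : ℝ} (hx : 0 < x) (hM : 0 ≤ M) :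
    (M*(40/x^3))^pp * x^2 = M^pp * 40^pp * x ^ (2-3*pp) := by
  have h3 : (x:ℝ)^3 = x ^ ((3:ℝ)) := by rw [← Real.rpow_natCast x 3]; norm_num
  have h2 : (x:ℝ)^2 = x ^ ((2:ℝ)) := by rw [← Real.rpow_natCast x 2]; norm_num
  rw [h3, h2, Real.mul_rpow hM (by positivity),
    Real.div_rpow (by norm_num : (0:ℝ) ≤ 40) (Real.rpow_nonneg hx.le _),
    ← Real.rpow_mul hx.le, div_eq_mul_inv, ← Real.rpow_neg hx.le,
    show 2-3*pp = -(3*pp) + 2 by ring, Real.rpow_add hx]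
  ring

lemma x2eq {x M pp : ℝ} (hx : 0 < x) (hM : 0 ≤ M) (hp : 1 < pp) :
    (16*M/x)^pp * (-(x^2)^(-pp+1)/(-pp+1))
      = M^pp * 16^pp * (1/(pp-1)) * x ^ (2-3*pp) := by
  have h2 : (x:ℝ)^2 = x ^ ((2:ℝ)) := by rw [← Real.rpow_natCast x 2]; norm_num
  have hne : pp - 1 ≠ 0 := by linarith
  have hne2 : 1 - pp ≠ 0 := by linarith
  have hdiv : ∀ z : ℝ, -z/(-pp+1) = z * (1/(pp-1)) := fun z => by
    field_simp
    linear_combination z * mul_inv_cancel₀ hne2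
  rw [hdiv, h2, Real.div_rpow (by positivity) hx.le, Real.mul_rpow (by norm_num : (0:ℝ) ≤ 16) hM,
    ← Real.rpow_mul hx.le, div_eq_mul_inv (16^pp*M^pp), ← Real.rpow_neg hx.le,
    show 2-3*pp = -pp + 2*(-pp+1) by ring, Real.rpow_add hx]
  ring


lemma hkbd1 {x t s : ℝ} (ht0 : 0 < t) (h1 : 0 < t - s) (h2 : t/8 ≤ t - s) :
    |heatKernelD2 x (t - s)| ≤ 23/(Real.sqrt t * t) := by
  refine (hk_bound1 x h1).trans ?_
  have h8 : Real.sqrt 8 ≤ 23/8 := by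
    have h := Real.sqrt_le_sqrt (show (8:ℝ) ≤ (23/8)^2 by norm_num)
    rwa [Real.sqrt_sq (by norm_num : (0:ℝ) ≤ 23/8)] at h
  have hsp8 : Real.sqrt t = Real.sqrt 8 * Real.sqrt (t/8) := by
    rw [← Real.sqrt_mul (by norm_num : (0:ℝ) ≤ 8)]
    congr 1
    ring
  have hsqτ : Real.sqrt (t/8) ≤ Real.sqrt (t-s) := Real.sqrt_le_sqrt h2
  have m1 : Real.sqrt (t/8) * (t/8) ≤ Real.sqrt (t-s) * (t-s) :=
    mul_le_mul hsqτ h2 (by positivity) (Real.sqrt_nonneg _)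
  rw [div_le_div_iff₀ (by positivity) (by positivity)]
  calc 1 * (Real.sqrt t * t) = (Real.sqrt 8 * 8) * (Real.sqrt (t/8) * (t/8)) := by
        rw [hsp8]; ring
    _ ≤ (23/8 * 8) * (Real.sqrt (t-s) * (t-s)) :=
        mul_le_mul (by linarith) m1 (by positivity) (by positivity)
    _ = 23 * (Real.sqrt (t-s) * (t-s)) := by ring

lemma hkbd2 {x t s : ℝ} (hx : 0 < x) (ht0 : 0 < t) (h1 : 0 < t - s) (h2 : t/8 ≤ t - s) :
    |heatKernelD2 x (t - s)| ≤ 16/(t * x) := by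
  refine (hk_bound2 h1 hx).trans ?_
  rw [div_le_div_iff₀ (by positivity) (by positivity)]
  nlinarith

theorem stmt6 (p : ℝ) (hp : 1 < p) :
    ∃ c : ℝ, 0 < c ∧ ∀ M : ℝ, 0 ≤ M → ∀ g : ℝ → ℝ, Measurable g →
      (∀ᵐ s ∂(volume : Measure ℝ), |g s| ≤ M) →
      Function.support g ⊆ Ioo (3 / 4 : ℝ) (7 / 8) →
      (∫⁻ t in Ioi (1 : ℝ), ∫⁻ x in Ioi (0 : ℝ),
          ENNReal.ofReal (|∫ s in Ioo (0 : ℝ) t, heatKernelD2 x (t - s) * g s| ^ p)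
        ≤ ENNReal.ofReal (c * M ^ p)) ∧
      (∫⁻ x in Ioi (1 : ℝ), ∫⁻ t in Ioi (0 : ℝ),
          ENNReal.ofReal (|∫ s in Ioo (0 : ℝ) t, heatKernelD2 x (t - s) * g s| ^ p)
        ≤ ENNReal.ofReal (c * M ^ p)) := by
  have hp0 : (0:ℝ) < p := by linarith
  have hq : (1 - 3*p)/2 < -1 := by linarith
  have hr : 2 - 3*p < -1 := by linarith
  have hq1 : (1-3*p)/2 + 1 < 0 := by linarith
  have hr1 : 2-3*p + 1 < 0 := by linarith
  set K1 : ℝ := 23^p + 16^p * (1/(p-1)) with hK1def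
  set K2 : ℝ := 40^p + 16^p * (1/(p-1)) with hK2def
  have hpc : (0:ℝ) < 1/(p-1) := by
    apply one_div_pos.2; linarith
  have hK1 : 0 ≤ K1 := by
    rw [hK1def]; positivity
  have hK2 : 0 ≤ K2 := by
    rw [hK2def]; positivity
  have hinvq : 0 < -1/((1-3*p)/2+1) := div_pos_of_neg_of_neg (by norm_num) hq1
  have hinvr : 0 < -1/(2-3*p+1) := div_pos_of_neg_of_neg (by norm_num) hr1
  set c : ℝ := K1 * (-1/((1-3*p)/2+1)) + K2 * (-1/(2-3*p+1)) + 1 with hcdef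
  have hc : 0 < c := by
    have h1 := mul_nonneg hK1 hinvq.le
    have h2 := mul_nonneg hK2 hinvr.le
    rw [hcdef]; linarith
  refine ⟨c, hc, ?_⟩
  intro M hM g hgm hgb hgs
  have hMp : 0 ≤ M^p := Real.rpow_nonneg hM p
  constructor
  · -- part (i)
    have inner : ∀ t ∈ Ioi (1:ℝ),
        (∫⁻ x in Ioi (0:ℝ),
          ENNReal.ofReal (|∫ s in Ioo (0 : ℝ) t, heatKernelD2 x (t - s) * g s| ^ p))
          ≤ ENNReal.ofReal (M^p * K1 * t ^ ((1-3*p)/2)) := by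
      intro t ht
      rw [mem_Ioi] at ht
      have ht0 : (0:ℝ) < t := by linarith
      have hst0 : 0 < Real.sqrt t := Real.sqrt_pos.2 ht0
      have hτfacts : ∀ s ∈ Ioo (3/4:ℝ) (7/8), s < t → 0 < t - s ∧ t/8 ≤ t - s := by
        intro s hs _
        obtain ⟨hs1, hs2⟩ := hs
        exact ⟨by linarith, by linarith⟩
      rw [← Ioc_union_Ioi_eq_Ioi (Real.sqrt_nonneg t),
          lintegral_union measurableSet_Ioi Ioc_disjoint_Ioi_same]
      have hA : (∫⁻ x in Ioc (0:ℝ) (Real.sqrt t),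
            ENNReal.ofReal (|∫ s in Ioo (0 : ℝ) t, heatKernelD2 x (t - s) * g s| ^ p))
          ≤ ENNReal.ofReal ((M*(23/(Real.sqrt t*t)))^p) * ENNReal.ofReal (Real.sqrt t) := by
        calc (∫⁻ x in Ioc (0:ℝ) (Real.sqrt t),
            ENNReal.ofReal (|∫ s in Ioo (0 : ℝ) t, heatKernelD2 x (t - s) * g s| ^ p))
            ≤ ∫⁻ _x in Ioc (0:ℝ) (Real.sqrt t),
                ENNReal.ofReal ((M*(23/(Real.sqrt t*t)))^p) := by
              apply setLIntegral_mono measurable_const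
              intro x _hx
              apply ENNReal.ofReal_le_ofReal
              apply Real.rpow_le_rpow (abs_nonneg _) ?_ hp0.le
              apply F_bound hM hgb hgs (by positivity)
              intro s hs hst
              obtain ⟨h1, h2⟩ := hτfacts s hs hst
              exact hkbd1 ht0 h1 h2
          _ = ENNReal.ofReal ((M*(23/(Real.sqrt t*t)))^p) * ENNReal.ofReal (Real.sqrt t) := by
              rw [setLIntegral_const, Real.volume_Ioc, sub_zero]
      have hB : (∫⁻ x in Ioi (Real.sqrt t),
            ENNReal.ofReal (|∫ s in Ioo (0 : ℝ) t, heatKernelD2 x (t - s) * g s| ^ p))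
          ≤ ENNReal.ofReal ((16*M/t)^p * (-(Real.sqrt t) ^ (-p+1)/(-p+1))) := by
        calc (∫⁻ x in Ioi (Real.sqrt t),
            ENNReal.ofReal (|∫ s in Ioo (0 : ℝ) t, heatKernelD2 x (t - s) * g s| ^ p))
            ≤ ∫⁻ x in Ioi (Real.sqrt t), ENNReal.ofReal ((16*M/t)^p * x ^ (-p)) := by
              apply setLIntegral_mono
              · fun_prop
              intro x hx
              rw [mem_Ioi] at hx
              have hx0 : 0 < x := hst0.trans hx
              have hF : |∫ s in Ioo (0 : ℝ) t, heatKernelD2 x (t - s) * g s|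
                  ≤ M * (16/(t*x)) := by
                apply F_bound hM hgb hgs (by positivity)
                intro s hs hst
                obtain ⟨h1, h2⟩ := hτfacts s hs hst
                exact hkbd2 hx0 ht0 h1 h2
              refine le_trans (ENNReal.ofReal_le_ofReal
                (Real.rpow_le_rpow (abs_nonneg _) hF hp0.le)) (le_of_eq ?_)
              congr 1
              rw [show M * (16/(t*x)) = (16*M/t) * x⁻¹ by field_simp,
                  Real.mul_rpow (by positivity) (by positivity),
                  Real.inv_rpow hx0.le, ← Real.rpow_neg hx0.le]
          _ = ENNReal.ofReal ((16*M/t)^p * (-(Real.sqrt t) ^ (-p+1)/(-p+1))) :=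
              lint_tail (by linarith : -p < -1) hst0 (by positivity)
      refine le_trans (add_le_add hA hB) ?_
      rw [← ENNReal.ofReal_mul (by positivity), ← ENNReal.ofReal_add (by positivity)
        (mul_nonneg (Real.rpow_nonneg (by positivity) _)
          (div_nonneg_of_nonpos
            (neg_nonpos.2 (Real.rpow_nonneg (Real.sqrt_nonneg t) _)) (by linarith)))]
      apply ENNReal.ofReal_le_ofReal
      rw [t1eq ht0 hM, t2eq ht0 hM hp]
      exact le_of_eq (by rw [hK1def]; ring)
    calc (∫⁻ t in Ioi (1:ℝ), ∫⁻ x in Ioi (0:ℝ),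
          ENNReal.ofReal (|∫ s in Ioo (0 : ℝ) t, heatKernelD2 x (t - s) * g s| ^ p))
        ≤ ∫⁻ t in Ioi (1:ℝ), ENNReal.ofReal (M^p * K1 * t ^ ((1-3*p)/2)) := by
          apply setLIntegral_mono
          · fun_prop
          exact inner
      _ = ENNReal.ofReal (M^p * K1 * (-(1:ℝ) ^ ((1-3*p)/2+1)/((1-3*p)/2+1))) :=
          lint_tail hq one_pos (by positivity)
      _ ≤ ENNReal.ofReal (c * M^p) := by
          apply ENNReal.ofReal_le_ofReal
          rw [Real.one_rpow]
          have hle : K1 * (-1/((1-3*p)/2+1)) ≤ c := by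
            have h2 := mul_nonneg hK2 hinvr.le
            rw [hcdef]; linarith
          calc M^p * K1 * (-1/((1-3*p)/2+1)) = K1 * (-1/((1-3*p)/2+1)) * M^p := by ring
            _ ≤ c * M^p := mul_le_mul_of_nonneg_right hle hMp
  · -- part (ii)
    have inner : ∀ x ∈ Ioi (1:ℝ),
        (∫⁻ t in Ioi (0:ℝ),
          ENNReal.ofReal (|∫ s in Ioo (0 : ℝ) t, heatKernelD2 x (t - s) * g s| ^ p))
          ≤ ENNReal.ofReal (M^p * K2 * x ^ (2-3*p)) := by
      intro x hx
      rw [mem_Ioi] at hx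
      have hx0 : (0:ℝ) < x := by linarith
      have hx20 : (0:ℝ) < x^2 := by positivity
      have hx21 : (1:ℝ) < x^2 := by nlinarith
      rw [← Ioc_union_Ioi_eq_Ioi hx20.le,
          lintegral_union measurableSet_Ioi Ioc_disjoint_Ioi_same]
      have hA : (∫⁻ t in Ioc (0:ℝ) (x^2),
            ENNReal.ofReal (|∫ s in Ioo (0 : ℝ) t, heatKernelD2 x (t - s) * g s| ^ p))
          ≤ ENNReal.ofReal ((M*(40/x^3))^p) * ENNReal.ofReal (x^2) := by
        calc (∫⁻ t in Ioc (0:ℝ) (x^2),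
            ENNReal.ofReal (|∫ s in Ioo (0 : ℝ) t, heatKernelD2 x (t - s) * g s| ^ p))
            ≤ ∫⁻ _t in Ioc (0:ℝ) (x^2), ENNReal.ofReal ((M*(40/x^3))^p) := by
              apply setLIntegral_mono measurable_const
              intro t _ht
              apply ENNReal.ofReal_le_ofReal
              apply Real.rpow_le_rpow (abs_nonneg _) ?_ hp0.le
              apply F_bound hM hgb hgs (by positivity)
              intro s hs hst
              exact hk_bound3 (by linarith : 0 < t - s) hx0
          _ = ENNReal.ofReal ((M*(40/x^3))^p) * ENNReal.ofReal (x^2) := by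
              rw [setLIntegral_const, Real.volume_Ioc, sub_zero]
      have hB : (∫⁻ t in Ioi (x^2),
            ENNReal.ofReal (|∫ s in Ioo (0 : ℝ) t, heatKernelD2 x (t - s) * g s| ^ p))
          ≤ ENNReal.ofReal ((16*M/x)^p * (-(x^2) ^ (-p+1)/(-p+1))) := by
        calc (∫⁻ t in Ioi (x^2),
            ENNReal.ofReal (|∫ s in Ioo (0 : ℝ) t, heatKernelD2 x (t - s) * g s| ^ p))
            ≤ ∫⁻ t in Ioi (x^2), ENNReal.ofReal ((16*M/x)^p * t ^ (-p)) := by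
              apply setLIntegral_mono
              · fun_prop
              intro t ht
              rw [mem_Ioi] at ht
              have ht1 : (1:ℝ) < t := hx21.trans ht
              have ht0 : (0:ℝ) < t := by linarith
              have hF : |∫ s in Ioo (0 : ℝ) t, heatKernelD2 x (t - s) * g s|
                  ≤ M * (16/(t*x)) := by
                apply F_bound hM hgb hgs (by positivity)
                intro s hs hst
                obtain ⟨hs1, hs2⟩ := hs
                exact hkbd2 hx0 (by linarith) (by linarith) (by linarith)
              refine le_trans (ENNReal.ofReal_le_ofReal
                (Real.rpow_le_rpow (abs_nonneg _) hF hp0.le)) (le_of_eq ?_)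
              congr 1
              rw [show M * (16/(t*x)) = (16*M/x) * t⁻¹ by field_simp,
                  Real.mul_rpow (by positivity) (by positivity),
                  Real.inv_rpow ht0.le, ← Real.rpow_neg ht0.le]
          _ = ENNReal.ofReal ((16*M/x)^p * (-(x^2) ^ (-p+1)/(-p+1))) :=
              lint_tail (by linarith : -p < -1) hx20 (by positivity)
      refine le_trans (add_le_add hA hB) ?_
      rw [← ENNReal.ofReal_mul (by positivity), ← ENNReal.ofReal_add (by positivity)
        (mul_nonneg (Real.rpow_nonneg (by positivity) _)
          (div_nonneg_of_nonpos
            (neg_nonpos.2 (Real.rpow_nonneg (by positivity) _)) (by linarith)))]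
      apply ENNReal.ofReal_le_ofReal
      rw [x1eq hx0 hM, x2eq hx0 hM hp]
      exact le_of_eq (by rw [hK2def]; ring)
    calc (∫⁻ x in Ioi (1:ℝ), ∫⁻ t in Ioi (0:ℝ),
          ENNReal.ofReal (|∫ s in Ioo (0 : ℝ) t, heatKernelD2 x (t - s) * g s| ^ p))
        ≤ ∫⁻ x in Ioi (1:ℝ), ENNReal.ofReal (M^p * K2 * x ^ (2-3*p)) := by
          apply setLIntegral_mono
          · fun_prop
          exact inner
      _ = ENNReal.ofReal (M^p * K2 * (-(1:ℝ) ^ (2-3*p+1)/(2-3*p+1))) :=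
          lint_tail hr one_pos (by positivity)
      _ ≤ ENNReal.ofReal (c * M^p) := by
          apply ENNReal.ofReal_le_ofReal
          rw [Real.one_rpow]
          have hle : K2 * (-1/(2-3*p+1)) ≤ c := by
            have h1 := mul_nonneg hK1 hinvq.le
            rw [hcdef]; linarith
          calc M^p * K2 * (-1/(2-3*p+1)) = K2 * (-1/(2-3*p+1)) * M^p := by ring
            _ ≤ c * M^p := mul_le_mul_of_nonneg_right hle hMp
end

section
/- Let 1 < p < ∞ and let 0 < a < 1 satisfy (1+a)(3−p)/2 < 1. Define g : (0,1) → ℝ by g(t) = Σ_{k=1}^∞ 1_{((2k+1)^{−a}, (2k)^{−a})}(t), the sum of the indicator functions of the disjoint intervals ((2k+1)^{−a}, (2k)^{−a}) for k ≥ 1. Then 0 ≤ g ≤ 1 on (0,1) (so g ∈ L^∞(0,1)), while the Gagliardo-type double integral diverges: ∫₀¹ ∫₀¹ |g(t) − g(s)|^p / |t − s|^{(1+p)/2} ds dt = ∞. -/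
open MeasureTheory Real Set

private lemma rpow_mvt_bounds {a : ℝ} (ha0 : 0 < a) {x y : ℝ} (hx : 0 < x) (hxy : x < y) :
    a * y ^ (-a - 1) * (y - x) ≤ x ^ (-a) - y ^ (-a) ∧
      x ^ (-a) - y ^ (-a) ≤ a * x ^ (-a - 1) * (y - x) := by
  obtain ⟨c, hc, hcd⟩ := exists_hasDerivAt_eq_slope (fun z => z ^ (-a))
      (fun z => (-a) * z ^ (-a - 1)) hxy
    (fun z hz => ((Real.hasDerivAt_rpow_const (p := -a)
        (Or.inl (ne_of_gt (lt_of_lt_of_le hx hz.1)))).continuousAt).continuousWithinAt)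
    (fun z hz => by
      simpa [show -a - 1 = -a - 1 from rfl] using
        Real.hasDerivAt_rpow_const (p := -a) (x := z) (Or.inl (ne_of_gt (hx.trans hz.1))))
  have hyx : (0:ℝ) < y - x := sub_pos.2 hxy
  have hc0 : 0 < c := hx.trans hc.1
  have h2 : -a * c ^ (-a - 1) * (y - x) = y ^ (-a) - x ^ (-a) := by
    rw [hcd]; field_simp
  have key : x ^ (-a) - y ^ (-a) = a * c ^ (-a - 1) * (y - x) := by
    linear_combination h2
  have hb1 : y ^ (-a - 1) ≤ c ^ (-a - 1) :=
    Real.rpow_le_rpow_of_nonpos hc0 hc.2.le (by linarith)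
  have hb2 : c ^ (-a - 1) ≤ x ^ (-a - 1) :=
    Real.rpow_le_rpow_of_nonpos hx hc.1.le (by linarith)
  constructor
  · rw [key]
    exact mul_le_mul_of_nonneg_right (mul_le_mul_of_nonneg_left hb1 ha0.le) hyx.le
  · rw [key]
    exact mul_le_mul_of_nonneg_right (mul_le_mul_of_nonneg_left hb2 ha0.le) hyx.le

private lemma tsum_ofReal_harmonic {c0 : ℝ} (hc0 : 0 < c0) :
    ∑' k : ℕ, ENNReal.ofReal (c0 * (1 / (2 * (k:ℝ) + 4))) = ⊤ := by
  by_contra h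
  have hs : Summable fun k : ℕ => (ENNReal.ofReal (c0 * (1 / (2 * (k:ℝ) + 4)))).toReal :=
    ENNReal.summable_toReal h
  have hs' : Summable fun k : ℕ => c0 * (1 / (2 * (k:ℝ) + 4)) := by
    refine hs.congr fun k => ?_
    rw [ENNReal.toReal_ofReal (by positivity)]
  have hs2 : Summable fun k : ℕ => 1 / (2 * (k:ℝ) + 4) := by
    refine (hs'.mul_left c0⁻¹).congr fun k => ?_
    field_simp
  have hs3 : Summable fun k : ℕ => (4:ℝ) * (1 / (2 * (k:ℝ) + 4)) := hs2.mul_left 4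
  have hs4 : Summable fun k : ℕ => 1 / ((k:ℝ) + 1) := by
    refine Summable.of_nonneg_of_le (fun k => by positivity) (fun k => ?_) hs3
    have hk : (0:ℝ) ≤ (k:ℝ) := Nat.cast_nonneg k
    rw [mul_one_div, div_le_div_iff₀ (by linarith) (by linarith)]
    linarith
  apply Real.not_summable_one_div_natCast
  refine (summable_nat_add_iff (f := fun n : ℕ => 1 / (n:ℝ)) 1).1 ?_
  exact hs4.congr fun n => by push_cast; ring

private lemma real_estimate {p a : ℝ} (hp : 1 < p) (ha0 : 0 < a) (ha1 : a < 1)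
    (hpa : (1 + a) * (3 - p) / 2 < 1) (k : ℕ) :
    (2 * a) ^ (-((1 + p) / 2)) * a ^ 2 / 2 ^ ((a + 1) * ((1 + p) / 2)) * (1 / (2 * (k:ℝ) + 4)) ≤
      ((2 * (k:ℝ) + 2) ^ (-a) - (2 * (k:ℝ) + 4) ^ (-a)) ^ (-((1 + p) / 2)) *
        ((2 * (k:ℝ) + 3) ^ (-a) - (2 * (k:ℝ) + 4) ^ (-a)) *
        ((2 * (k:ℝ) + 2) ^ (-a) - (2 * (k:ℝ) + 3) ^ (-a)) := by
  set q : ℝ := (1 + p) / 2 with hqdef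
  have hq0 : 0 < q := by rw [hqdef]; linarith
  have hK : (0:ℝ) ≤ (k:ℝ) := Nat.cast_nonneg k
  set K : ℝ := (k:ℝ) with hKdef
  have h1 : (0:ℝ) < 2 * K + 2 := by linarith
  have h2 : (0:ℝ) < 2 * K + 3 := by linarith
  have h3 : (0:ℝ) < 2 * K + 4 := by linarith
  -- MVT consequences
  have mvt1 := (rpow_mvt_bounds ha0 h1 (show 2 * K + 2 < 2 * K + 3 by linarith)).1
  rw [show (2 * K + 3) - (2 * K + 2) = 1 by ring, mul_one] at mvt1
  have mvt2 := (rpow_mvt_bounds ha0 h2 (show 2 * K + 3 < 2 * K + 4 by linarith)).1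
  rw [show (2 * K + 4) - (2 * K + 3) = 1 by ring, mul_one] at mvt2
  have mvt3 := (rpow_mvt_bounds ha0 h1 (show 2 * K + 2 < 2 * K + 4 by linarith)).2
  rw [show (2 * K + 4) - (2 * K + 2) = 2 by ring] at mvt3
  -- factor lower bounds
  have F3 : a * (2 * K + 4) ^ (-a - 1) ≤ (2 * K + 2) ^ (-a) - (2 * K + 3) ^ (-a) :=
    le_trans (mul_le_mul_of_nonneg_left
      (Real.rpow_le_rpow_of_nonpos h2 (by linarith) (by linarith)) ha0.le) mvt1
  have F2 : a * (2 * K + 4) ^ (-a - 1) ≤ (2 * K + 3) ^ (-a) - (2 * K + 4) ^ (-a) := mvt2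
  have hD0 : (0:ℝ) < (2 * K + 2) ^ (-a) - (2 * K + 4) ^ (-a) :=
    sub_pos.2 (Real.rpow_lt_rpow_of_neg h1 (by linarith) (by linarith))
  have hhalfpos : (0:ℝ) < (2 * K + 4) / 2 := by linarith
  have hDle : (2 * K + 2) ^ (-a) - (2 * K + 4) ^ (-a)
      ≤ 2 * a * ((2 * K + 4) / 2) ^ (-a - 1) := by
    have hstep : (2 * K + 2) ^ (-a - 1) ≤ ((2 * K + 4) / 2) ^ (-a - 1) :=
      Real.rpow_le_rpow_of_nonpos hhalfpos (by linarith) (by linarith)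
    calc (2 * K + 2) ^ (-a) - (2 * K + 4) ^ (-a)
        ≤ a * (2 * K + 2) ^ (-a - 1) * 2 := mvt3
      _ = 2 * a * (2 * K + 2) ^ (-a - 1) := by ring
      _ ≤ 2 * a * ((2 * K + 4) / 2) ^ (-a - 1) :=
          mul_le_mul_of_nonneg_left hstep (by linarith)
  have F1 : (2 * a) ^ (-q) * ((2 * K + 4) / 2) ^ ((a + 1) * q)
      ≤ ((2 * K + 2) ^ (-a) - (2 * K + 4) ^ (-a)) ^ (-q) := by
    have h := Real.rpow_le_rpow_of_nonpos hD0 hDle (neg_nonpos.2 hq0.le)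
    rw [Real.mul_rpow (by positivity) (by positivity),
      ← Real.rpow_mul hhalfpos.le,
      show (-a - 1) * (-q) = (a + 1) * q by ring] at h
    exact h
  -- combine
  have hlhs2 : (0:ℝ) ≤ a * (2 * K + 4) ^ (-a - 1) := by positivity
  have hDq : (0:ℝ) ≤ ((2 * K + 2) ^ (-a) - (2 * K + 4) ^ (-a)) ^ (-q) :=
    Real.rpow_nonneg hD0.le _
  have step1 : ((2 * a) ^ (-q) * ((2 * K + 4) / 2) ^ ((a + 1) * q)) * (a * (2 * K + 4) ^ (-a - 1))
      ≤ ((2 * K + 2) ^ (-a) - (2 * K + 4) ^ (-a)) ^ (-q) *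
        ((2 * K + 3) ^ (-a) - (2 * K + 4) ^ (-a)) :=
    mul_le_mul F1 F2 hlhs2 hDq
  have step2 : ((2 * a) ^ (-q) * ((2 * K + 4) / 2) ^ ((a + 1) * q)) * (a * (2 * K + 4) ^ (-a - 1))
        * (a * (2 * K + 4) ^ (-a - 1))
      ≤ ((2 * K + 2) ^ (-a) - (2 * K + 4) ^ (-a)) ^ (-q) *
        ((2 * K + 3) ^ (-a) - (2 * K + 4) ^ (-a)) *
        ((2 * K + 2) ^ (-a) - (2 * K + 3) ^ (-a)) :=
    mul_le_mul step1 F3 hlhs2 (mul_nonneg hDq (le_trans hlhs2 F2))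
  refine le_trans ?_ step2
  -- rewrite the lower product as c0 * (2K+4)^exponent
  have heq : ((2 * a) ^ (-q) * ((2 * K + 4) / 2) ^ ((a + 1) * q)) * (a * (2 * K + 4) ^ (-a - 1))
        * (a * (2 * K + 4) ^ (-a - 1))
      = (2 * a) ^ (-q) * a ^ 2 / 2 ^ ((a + 1) * q) *
        (2 * K + 4) ^ ((a + 1) * q + (-a - 1) + (-a - 1)) := by
    rw [Real.div_rpow h3.le (by norm_num : (0:ℝ) ≤ 2), Real.rpow_add h3, Real.rpow_add h3]
    ring
  rw [heq]
  have hexp1 : (a + 1) * q + (-a - 1) + (-a - 1) = -((1 + a) * (3 - p) / 2) := by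
    rw [hqdef]; ring
  have hge : (1:ℝ) / (2 * K + 4) ≤ (2 * K + 4) ^ ((a + 1) * q + (-a - 1) + (-a - 1)) := by
    have hb : (2 * K + 4) ^ (-1 : ℝ) ≤ (2 * K + 4) ^ ((a + 1) * q + (-a - 1) + (-a - 1)) :=
      Real.rpow_le_rpow_of_exponent_le (by linarith) (by rw [hexp1]; linarith)
    calc (1:ℝ) / (2 * K + 4) = (2 * K + 4) ^ (-1 : ℝ) := by
          rw [Real.rpow_neg h3.le, Real.rpow_one, one_div]
      _ ≤ _ := hb
  exact mul_le_mul_of_nonneg_left hge (by positivity)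

theorem stmt7 (p a : ℝ) (hp : 1 < p) (ha0 : 0 < a) (ha1 : a < 1)
    (hpa : (1 + a) * (3 - p) / 2 < 1)
    (g : ℝ → ℝ)
    (hg : ∀ t : ℝ, g t = ∑' k : ℕ,
      (Ioo ((2 * (k : ℝ) + 3) ^ (-a)) ((2 * (k : ℝ) + 2) ^ (-a))).indicator
        (fun _ => (1 : ℝ)) t) :
    (∀ t ∈ Ioo (0 : ℝ) 1, 0 ≤ g t ∧ g t ≤ 1) ∧
    (∫⁻ t in Ioo (0 : ℝ) 1, ∫⁻ s in Ioo (0 : ℝ) 1,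
        ENNReal.ofReal (|g t - g s| ^ p / |t - s| ^ ((1 + p) / 2))) = ⊤ := by
  have hanti : ∀ x y : ℝ, 0 < x → x < y → y ^ (-a) < x ^ (-a) :=
    fun x y hx hxy => Real.rpow_lt_rpow_of_neg hx hxy (by linarith)
  have hanti' : ∀ x y : ℝ, 0 < x → x ≤ y → y ^ (-a) ≤ x ^ (-a) :=
    fun x y hx hxy => Real.rpow_le_rpow_of_nonpos hx hxy (by linarith)
  -- values of g
  have hgI : ∀ (k : ℕ) (t : ℝ),
      t ∈ Ioo ((2 * (k : ℝ) + 3) ^ (-a)) ((2 * (k : ℝ) + 2) ^ (-a)) → g t = 1 := by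
    intro k t ht
    rw [hg]
    rw [tsum_eq_single k ?_]
    · rw [indicator_of_mem ht]
    · intro j hjk
      rw [indicator_of_notMem]
      intro hmem
      rcases Nat.lt_or_ge j k with h | h
      · have hj : (j:ℝ) + 1 ≤ (k:ℝ) := by exact_mod_cast Nat.succ_le_of_lt h
        have hle : (2 * (k:ℝ) + 2) ^ (-a) ≤ (2 * (j:ℝ) + 3) ^ (-a) :=
          hanti' _ _ (by positivity) (by linarith)
        linarith [hmem.1, ht.2]
      · have h' : k < j := lt_of_le_of_ne h (Ne.symm hjk)
        have hj : (k:ℝ) + 1 ≤ (j:ℝ) := by exact_mod_cast Nat.succ_le_of_lt h'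
        have hle : (2 * (j:ℝ) + 2) ^ (-a) ≤ (2 * (k:ℝ) + 3) ^ (-a) :=
          hanti' _ _ (by positivity) (by linarith)
        linarith [hmem.2, ht.1]
  have hgJ : ∀ (k : ℕ) (t : ℝ),
      t ∈ Ioo ((2 * (k : ℝ) + 4) ^ (-a)) ((2 * (k : ℝ) + 3) ^ (-a)) → g t = 0 := by
    intro k t ht
    rw [hg]
    refine (tsum_congr (fun j => ?_)).trans tsum_zero
    rw [indicator_of_notMem]
    intro hmem
    rcases Nat.lt_or_ge k j with h | h
    · have hj : (k:ℝ) + 1 ≤ (j:ℝ) := by exact_mod_cast Nat.succ_le_of_lt h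
      have hle : (2 * (j:ℝ) + 2) ^ (-a) ≤ (2 * (k:ℝ) + 4) ^ (-a) :=
        hanti' _ _ (by positivity) (by linarith)
      linarith [hmem.2, ht.1]
    · have hj : (j:ℝ) ≤ (k:ℝ) := by exact_mod_cast h
      have hle : (2 * (k:ℝ) + 3) ^ (-a) ≤ (2 * (j:ℝ) + 3) ^ (-a) :=
        hanti' _ _ (by positivity) (by linarith)
      linarith [hmem.1, ht.2]
  constructor
  · -- boundedness
    intro t _
    constructor
    · rw [hg]
      exact tsum_nonneg fun j => Set.indicator_nonneg (fun _ _ => zero_le_one) t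
    · by_cases hex : ∃ k : ℕ, t ∈ Ioo ((2 * (k : ℝ) + 3) ^ (-a)) ((2 * (k : ℝ) + 2) ^ (-a))
      · obtain ⟨k, hk⟩ := hex
        rw [hgI k t hk]
      · push_neg at hex
        have h0 : g t = 0 := by
          rw [hg]
          exact (tsum_congr fun j => indicator_of_notMem (hex j) _).trans tsum_zero
        rw [h0]; exact zero_le_one
  · -- divergence
    have hq0 : (0:ℝ) < (1 + p) / 2 := by linarith
    have hML : ∀ k : ℕ, (2 * (k:ℝ) + 4) ^ (-a) < (2 * (k:ℝ) + 3) ^ (-a) :=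
      fun k => hanti _ _ (by positivity) (by linarith)
    have hLU : ∀ k : ℕ, (2 * (k:ℝ) + 3) ^ (-a) < (2 * (k:ℝ) + 2) ^ (-a) :=
      fun k => hanti _ _ (by positivity) (by linarith)
    have hU1 : ∀ k : ℕ, (2 * (k:ℝ) + 2) ^ (-a) < 1 := fun k =>
      Real.rpow_lt_one_of_one_lt_of_neg
        (by have := Nat.cast_nonneg (α := ℝ) k; linarith) (by linarith)
    have hIsub : ∀ k : ℕ,
        Ioo ((2 * (k:ℝ) + 3) ^ (-a)) ((2 * (k:ℝ) + 2) ^ (-a)) ⊆ Ioo (0:ℝ) 1 :=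
      fun k t ht => ⟨(Real.rpow_pos_of_pos (by positivity) _).trans ht.1,
        ht.2.trans (hU1 k)⟩
    have hJsub : ∀ k : ℕ,
        Ioo ((2 * (k:ℝ) + 4) ^ (-a)) ((2 * (k:ℝ) + 3) ^ (-a)) ⊆ Ioo (0:ℝ) 1 :=
      fun k t ht => ⟨(Real.rpow_pos_of_pos (by positivity) _).trans ht.1,
        ht.2.trans ((hLU k).trans (hU1 k))⟩
    -- disjointness of the I-intervals
    have hdisj : Pairwise (Function.onFun Disjoint
        (fun k : ℕ => Ioo ((2 * (k:ℝ) + 3) ^ (-a)) ((2 * (k:ℝ) + 2) ^ (-a)))) := by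
      have key : ∀ j k : ℕ, j < k →
          (2 * (k:ℝ) + 2) ^ (-a) ≤ (2 * (j:ℝ) + 3) ^ (-a) := by
        intro j k h
        have hj : (j:ℝ) + 1 ≤ (k:ℝ) := by exact_mod_cast Nat.succ_le_of_lt h
        exact hanti' _ _ (by positivity) (by linarith)
      intro j k hjk
      rw [Function.onFun, Set.Ioo_disjoint_Ioo]
      rcases hjk.lt_or_gt with h | h
      · exact (min_le_right _ _).trans ((key j k h).trans (le_max_left _ _))
      · exact (min_le_left _ _).trans ((key k j h).trans (le_max_right _ _))
    -- pointwise/inner/outer bounds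
    have hinner : ∀ (k : ℕ) (t : ℝ),
        t ∈ Ioo ((2 * (k:ℝ) + 3) ^ (-a)) ((2 * (k:ℝ) + 2) ^ (-a)) →
        ENNReal.ofReal (((2 * (k:ℝ) + 2) ^ (-a) - (2 * (k:ℝ) + 4) ^ (-a)) ^ (-((1 + p) / 2))) *
          ENNReal.ofReal ((2 * (k:ℝ) + 3) ^ (-a) - (2 * (k:ℝ) + 4) ^ (-a))
        ≤ ∫⁻ s in Ioo (0:ℝ) 1,
            ENNReal.ofReal (|g t - g s| ^ p / |t - s| ^ ((1 + p) / 2)) := by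
      intro k t ht
      calc ENNReal.ofReal (((2 * (k:ℝ) + 2) ^ (-a) - (2 * (k:ℝ) + 4) ^ (-a)) ^ (-((1 + p) / 2))) *
            ENNReal.ofReal ((2 * (k:ℝ) + 3) ^ (-a) - (2 * (k:ℝ) + 4) ^ (-a))
          = ∫⁻ _ in Ioo ((2 * (k:ℝ) + 4) ^ (-a)) ((2 * (k:ℝ) + 3) ^ (-a)),
              ENNReal.ofReal
                (((2 * (k:ℝ) + 2) ^ (-a) - (2 * (k:ℝ) + 4) ^ (-a)) ^ (-((1 + p) / 2))) := by
            rw [setLIntegral_const, Real.volume_Ioo]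
        _ ≤ ∫⁻ s in Ioo ((2 * (k:ℝ) + 4) ^ (-a)) ((2 * (k:ℝ) + 3) ^ (-a)),
              ENNReal.ofReal (|g t - g s| ^ p / |t - s| ^ ((1 + p) / 2)) := by
            refine setLIntegral_mono' measurableSet_Ioo fun s hs => ?_
            rw [hgI k t ht, hgJ k s hs, sub_zero, abs_one, Real.one_rpow]
            have hts : 0 < t - s := by
              have := ht.1; have := hs.2; linarith
            have hsub : t - s ≤ (2 * (k:ℝ) + 2) ^ (-a) - (2 * (k:ℝ) + 4) ^ (-a) := by
              have := ht.2; have := hs.1; linarith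
            rw [abs_of_pos hts]
            apply ENNReal.ofReal_le_ofReal
            have hpow : (t - s) ^ ((1 + p) / 2)
                ≤ ((2 * (k:ℝ) + 2) ^ (-a) - (2 * (k:ℝ) + 4) ^ (-a)) ^ ((1 + p) / 2) :=
              Real.rpow_le_rpow hts.le hsub hq0.le
            rw [Real.rpow_neg (by linarith : (0:ℝ) ≤ (2 * (k:ℝ) + 2) ^ (-a) - (2 * (k:ℝ) + 4) ^ (-a)),
              ← one_div]
            exact one_div_le_one_div_of_le (Real.rpow_pos_of_pos hts _) hpow
        _ ≤ ∫⁻ s in Ioo (0:ℝ) 1,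
              ENNReal.ofReal (|g t - g s| ^ p / |t - s| ^ ((1 + p) / 2)) :=
            lintegral_mono' (Measure.restrict_mono (hJsub k) le_rfl) le_rfl
    have houter : ∀ k : ℕ,
        ENNReal.ofReal (((2 * (k:ℝ) + 2) ^ (-a) - (2 * (k:ℝ) + 4) ^ (-a)) ^ (-((1 + p) / 2))) *
          ENNReal.ofReal ((2 * (k:ℝ) + 3) ^ (-a) - (2 * (k:ℝ) + 4) ^ (-a)) *
          ENNReal.ofReal ((2 * (k:ℝ) + 2) ^ (-a) - (2 * (k:ℝ) + 3) ^ (-a))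
        ≤ ∫⁻ t in Ioo ((2 * (k:ℝ) + 3) ^ (-a)) ((2 * (k:ℝ) + 2) ^ (-a)),
            ∫⁻ s in Ioo (0:ℝ) 1,
              ENNReal.ofReal (|g t - g s| ^ p / |t - s| ^ ((1 + p) / 2)) := by
      intro k
      calc ENNReal.ofReal (((2 * (k:ℝ) + 2) ^ (-a) - (2 * (k:ℝ) + 4) ^ (-a)) ^ (-((1 + p) / 2))) *
            ENNReal.ofReal ((2 * (k:ℝ) + 3) ^ (-a) - (2 * (k:ℝ) + 4) ^ (-a)) *
            ENNReal.ofReal ((2 * (k:ℝ) + 2) ^ (-a) - (2 * (k:ℝ) + 3) ^ (-a))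
          = ∫⁻ _ in Ioo ((2 * (k:ℝ) + 3) ^ (-a)) ((2 * (k:ℝ) + 2) ^ (-a)),
              (ENNReal.ofReal
                (((2 * (k:ℝ) + 2) ^ (-a) - (2 * (k:ℝ) + 4) ^ (-a)) ^ (-((1 + p) / 2))) *
                ENNReal.ofReal ((2 * (k:ℝ) + 3) ^ (-a) - (2 * (k:ℝ) + 4) ^ (-a))) := by
            rw [setLIntegral_const, Real.volume_Ioo]
        _ ≤ _ := setLIntegral_mono' measurableSet_Ioo fun t ht => hinner k t ht
    -- the divergent lower sum
    have hc0 : (0:ℝ) < (2 * a) ^ (-((1 + p) / 2)) * a ^ 2 / 2 ^ ((a + 1) * ((1 + p) / 2)) := by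
      positivity
    have hterm : ∀ k : ℕ,
        ENNReal.ofReal ((2 * a) ^ (-((1 + p) / 2)) * a ^ 2 / 2 ^ ((a + 1) * ((1 + p) / 2)) *
          (1 / (2 * (k:ℝ) + 4)))
        ≤ ENNReal.ofReal
            (((2 * (k:ℝ) + 2) ^ (-a) - (2 * (k:ℝ) + 4) ^ (-a)) ^ (-((1 + p) / 2))) *
          ENNReal.ofReal ((2 * (k:ℝ) + 3) ^ (-a) - (2 * (k:ℝ) + 4) ^ (-a)) *
          ENNReal.ofReal ((2 * (k:ℝ) + 2) ^ (-a) - (2 * (k:ℝ) + 3) ^ (-a)) := by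
      intro k
      have hD0 : (0:ℝ) ≤ (2 * (k:ℝ) + 2) ^ (-a) - (2 * (k:ℝ) + 4) ^ (-a) := by
        have := hML k; have := hLU k; linarith
      have hDq : (0:ℝ) ≤ ((2 * (k:ℝ) + 2) ^ (-a) - (2 * (k:ℝ) + 4) ^ (-a)) ^ (-((1 + p) / 2)) :=
        Real.rpow_nonneg hD0 _
      rw [← ENNReal.ofReal_mul hDq,
        ← ENNReal.ofReal_mul (mul_nonneg hDq (by have := hML k; have := hLU k; linarith))]
      exact ENNReal.ofReal_le_ofReal (real_estimate hp ha0 ha1 hpa k)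
    rw [eq_top_iff]
    calc (⊤ : ENNReal)
        = ∑' k : ℕ, ENNReal.ofReal
            ((2 * a) ^ (-((1 + p) / 2)) * a ^ 2 / 2 ^ ((a + 1) * ((1 + p) / 2)) *
              (1 / (2 * (k:ℝ) + 4))) := (tsum_ofReal_harmonic hc0).symm
      _ ≤ ∑' k : ℕ,
            (ENNReal.ofReal
              (((2 * (k:ℝ) + 2) ^ (-a) - (2 * (k:ℝ) + 4) ^ (-a)) ^ (-((1 + p) / 2))) *
              ENNReal.ofReal ((2 * (k:ℝ) + 3) ^ (-a) - (2 * (k:ℝ) + 4) ^ (-a)) *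
              ENNReal.ofReal ((2 * (k:ℝ) + 2) ^ (-a) - (2 * (k:ℝ) + 3) ^ (-a))) :=
          ENNReal.tsum_le_tsum hterm
      _ ≤ ∑' k : ℕ, ∫⁻ t in Ioo ((2 * (k:ℝ) + 3) ^ (-a)) ((2 * (k:ℝ) + 2) ^ (-a)),
            ∫⁻ s in Ioo (0:ℝ) 1,
              ENNReal.ofReal (|g t - g s| ^ p / |t - s| ^ ((1 + p) / 2)) :=
          ENNReal.tsum_le_tsum houter
      _ = ∫⁻ t in ⋃ k : ℕ, Ioo ((2 * (k:ℝ) + 3) ^ (-a)) ((2 * (k:ℝ) + 2) ^ (-a)),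
            ∫⁻ s in Ioo (0:ℝ) 1,
              ENNReal.ofReal (|g t - g s| ^ p / |t - s| ^ ((1 + p) / 2)) :=
          (lintegral_iUnion (fun _ => measurableSet_Ioo) hdisj _).symm
      _ ≤ ∫⁻ t in Ioo (0:ℝ) 1, ∫⁻ s in Ioo (0:ℝ) 1,
            ENNReal.ofReal (|g t - g s| ^ p / |t - s| ^ ((1 + p) / 2)) :=
          lintegral_mono' (Measure.restrict_mono (iUnion_subset hIsub) le_rfl) le_rfl
end

section
/- Let q > 1 and r > 3q/2 be real numbers. Define g : (3/4, 7/8) → ℝ by g(t) = (t − 3/4)^{1 − 1/q} · ( log( 1/(t − 3/4) ) )^{−1}. Then the Gagliardo-type double integral diverges: ∫_{3/4}^{7/8} ∫_{3/4}^{7/8} |g(t) − g(s)|^r / |t − s|^{r + 1/2} ds dt = ∞. -/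
open MeasureTheory Real Set

lemma aux_inv_top (a δ : ℝ) (hδ : 0 < δ) :
    ∫⁻ x in Ioo a (a + δ), ENNReal.ofReal (x - a)⁻¹ = ⊤ := by
  have hf : Measurable fun x : ℝ => ENNReal.ofReal (x - a)⁻¹ := by fun_prop
  have h1 : ∫⁻ x in Ioo a (a + δ), ENNReal.ofReal (x - a)⁻¹
      = ∫⁻ x in Ioo (0:ℝ) δ, ENNReal.ofReal x⁻¹ := by
    conv_lhs => rw [← map_add_right_eq_self volume a]
    rw [setLIntegral_map measurableSet_Ioo hf (measurable_add_const a)]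
    have hpre : (· + a) ⁻¹' Ioo a (a + δ) = Ioo 0 δ := by
      ext x
      simp only [Set.mem_preimage, Set.mem_Ioo]
      constructor <;> rintro ⟨h1, h2⟩ <;> constructor <;> linarith
    rw [hpre]
    simp
  rw [h1]
  by_contra h
  have hint : IntegrableOn (fun x : ℝ => x⁻¹) (Ioo (0:ℝ) δ) := by
    refine (lintegral_ofReal_ne_top_iff_integrable ?_ ?_).1 h
    · exact measurable_inv.aestronglyMeasurable
    · filter_upwards [ae_restrict_mem measurableSet_Ioo] with x hx
      exact inv_nonneg.2 hx.1.le
  have hint2 : IntegrableOn (fun x : ℝ => x ^ (-1:ℝ)) (Ioo (0:ℝ) δ) := by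
    refine hint.congr_fun (fun x hx => ?_) measurableSet_Ioo
    rw [Real.rpow_neg_one]
  have := (intervalIntegral.integrableOn_Ioo_rpow_iff hδ).1 hint2
  linarith

set_option maxHeartbeats 1000000 in
theorem stmt11 (q r : ℝ) (hq : 1 < q) (hr : 3 * q / 2 < r)
    (g : ℝ → ℝ)
    (hg : ∀ t : ℝ, g t = (t - 3 / 4) ^ (1 - 1 / q) * (Real.log (1 / (t - 3 / 4)))⁻¹) :
    (∫⁻ t in Ioo (3 / 4 : ℝ) (7 / 8), ∫⁻ s in Ioo (3 / 4 : ℝ) (7 / 8),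
        ENNReal.ofReal (|g t - g s| ^ r / |t - s| ^ (r + 1 / 2))) = ⊤ := by
  have hq0 : 0 < q := by linarith
  have hr0 : 0 < r := by nlinarith
  set α : ℝ := 1 - 1/q with hα
  have hq1 : 1/q < 1 := by rw [div_lt_one hq0]; linarith
  have hα0 : 0 < α := by simp only [hα]; linarith
  set ε : ℝ := r/q - 3/2 with hε
  have hε0 : 0 < ε := by
    have : 3/2 < r/q := by rw [lt_div_iff₀ hq0]; linarith
    simp only [hε]; linarith
  set κ : ℝ := 1 - ((2:ℝ) ^ α)⁻¹ with hκ
  have h2α : 1 < (2:ℝ) ^ α := (Real.one_lt_rpow_iff_of_pos two_pos).2 (Or.inl ⟨one_lt_two, hα0⟩)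
  have h2α0 : 0 < (2:ℝ) ^ α := by positivity
  have hκ0 : 0 < κ := by
    have : ((2:ℝ) ^ α)⁻¹ < 1 := inv_lt_one_of_one_lt₀ h2α
    simp only [hκ]; linarith
  clear_value α ε κ
  -- choose δ
  obtain ⟨δ, hδ0, hδ18, hδkey⟩ : ∃ δ : ℝ, 0 < δ ∧ δ ≤ 1/8 ∧
      ∀ v ∈ Ioo (0:ℝ) δ, v ^ ε * (Real.log (1/v)) ^ r ≤ κ ^ r / 2 := by
    have h1 : Filter.Tendsto (fun v : ℝ => (-Real.log v) * v ^ (ε/r))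
        (nhdsWithin 0 (Ioi 0)) (nhds 0) := by
      have h := (tendsto_log_mul_rpow_nhdsGT_zero (div_pos hε0 hr0)).neg
      simpa [neg_mul] using h
    have h2 : Filter.Tendsto (fun y : ℝ => y ^ r) (nhds (0:ℝ)) (nhds 0) := by
      have := (Real.continuousAt_rpow_const 0 r (Or.inr hr0.le)).tendsto
      simpa [Real.zero_rpow hr0.ne'] using this
    have htend : Filter.Tendsto (fun v : ℝ => v ^ ε * (Real.log (1/v)) ^ r)
        (nhdsWithin 0 (Ioi 0)) (nhds 0) := by
      refine (h2.comp h1).congr' ?_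
      filter_upwards [Ioo_mem_nhdsGT_of_mem (Set.mem_Ico.2 ⟨le_refl (0:ℝ), zero_lt_one⟩)]
        with v hv1
      have hv0 : 0 < v := hv1.1
      have hlog : 0 ≤ -Real.log v := by
        have := Real.log_nonpos hv0.le hv1.2.le; linarith
      show ((-Real.log v) * v ^ (ε/r)) ^ r = v ^ ε * (Real.log (1/v)) ^ r
      rw [Real.mul_rpow hlog (Real.rpow_nonneg hv0.le _), ← Real.rpow_mul hv0.le,
        div_mul_cancel₀ _ hr0.ne', one_div, Real.log_inv]
      ring
    have hev : ∀ᶠ v in nhdsWithin (0:ℝ) (Ioi 0),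
        v ^ ε * (Real.log (1/v)) ^ r ≤ κ ^ r / 2 := by
      have hpos : (0:ℝ) < κ ^ r / 2 := by positivity
      exact (htend.eventually_lt_const hpos).mono fun v h => h.le
    rw [Filter.eventually_iff, mem_nhdsGT_iff_exists_Ioo_subset] at hev
    obtain ⟨u, hu, hsub⟩ := hev
    refine ⟨min u (1/8), lt_min hu (by norm_num), min_le_right _ _, fun v hv => ?_⟩
    exact hsub ⟨hv.1, lt_of_lt_of_le hv.2 (min_le_left _ _)⟩
  -- main chain
  rw [eq_top_iff]
  have hsubδ : Ioo (3/4:ℝ) (3/4 + δ) ⊆ Ioo (3/4:ℝ) (7/8) :=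
    Set.Ioo_subset_Ioo le_rfl (by linarith)
  calc (⊤ : ENNReal) = ∫⁻ t in Ioo (3/4:ℝ) (3/4 + δ), ENNReal.ofReal (t - 3/4)⁻¹ :=
        (aux_inv_top _ _ hδ0).symm
    _ ≤ ∫⁻ t in Ioo (3/4:ℝ) (3/4 + δ), (∫⁻ s in Ioo (3/4:ℝ) (7/8),
          ENNReal.ofReal (|g t - g s| ^ r / |t - s| ^ (r + 1/2))) := by
        refine lintegral_mono_ae ?_
        filter_upwards [ae_restrict_mem measurableSet_Ioo] with t ht
        set v : ℝ := t - 3/4 with hv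
        have hv0 : 0 < v := by simp only [hv]; linarith [ht.1]
        have hvδ : v < δ := by simp only [hv]; linarith [ht.2]
        have hv18 : v < 1/8 := lt_of_lt_of_le hvδ hδ18
        set L : ℝ := Real.log (1/v) with hL
        clear_value v L
        have hL0 : 0 < L := by rw [hL]; exact Real.log_pos ((one_lt_div hv0).2 (by linarith))
        have hLr : 0 < L ^ r := Real.rpow_pos_of_pos hL0 r
        set c : ℝ := κ ^ r * v ^ (α*r) / L ^ r / v ^ (r + 1/2) with hc
        clear_value c
        have hc0 : 0 < c := by
          rw [hc]
          exact div_pos (div_pos (mul_pos (Real.rpow_pos_of_pos hκ0 r)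
            (Real.rpow_pos_of_pos hv0 _)) hLr) (Real.rpow_pos_of_pos hv0 _)
        -- Step A : pointwise bound
        have hA : ∀ s ∈ Ioo (3/4:ℝ) (3/4 + v/2),
            c ≤ |g t - g s| ^ r / |t - s| ^ (r + 1/2) := by
          intro s hs
          set u : ℝ := s - 3/4 with hu
          clear_value u
          have hu0 : 0 < u := by simp only [hu]; linarith [hs.1]
          have huv : u < v/2 := by simp only [hu]; linarith [hs.2]
          have hgt : g t = v ^ α / L := by
            rw [hg t, ← hv, ← hL, ← div_eq_mul_inv]
          have hgs : g s ≤ v ^ α / (2:ℝ) ^ α / L := by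
            rw [hg s, ← hu]
            have h1 : L ≤ Real.log (1/u) := by
              rw [hL]
              exact Real.log_le_log (one_div_pos.2 hv0)
                (one_div_le_one_div_of_le hu0 (by linarith))
            have hlogu : 0 < Real.log (1/u) := lt_of_lt_of_le hL0 h1
            have h2 : u ^ α ≤ (v/2) ^ α := Real.rpow_le_rpow hu0.le (by linarith) hα0.le
            have h3 : (v/2) ^ α = v ^ α / (2:ℝ) ^ α := Real.div_rpow hv0.le (by norm_num : (0:ℝ) ≤ 2) α
            calc u ^ α * (Real.log (1/u))⁻¹ ≤ (v/2) ^ α * L⁻¹ := by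
                  apply mul_le_mul h2 (inv_anti₀ hL0 h1) (by positivity) (by positivity)
              _ = v ^ α / (2:ℝ) ^ α / L := by rw [h3]; ring
          have hvα : 0 < v ^ α := Real.rpow_pos_of_pos hv0 α
          have hdiffeq : v ^ α / L - v ^ α / (2:ℝ) ^ α / L = κ * v ^ α / L := by
            rw [hκ]; field_simp
          have hdiff : κ * v ^ α / L ≤ g t - g s := by
            rw [hgt]; linarith
          have habs : κ * v ^ α / L ≤ |g t - g s| := le_trans hdiff (le_abs_self _)
          have htseq : t - s = v - u := by rw [hv, hu]; ring
          have htspos : 0 < t - s := by rw [htseq]; linarith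
          have hts : |t - s| ≤ v := by
            rw [abs_of_pos htspos, htseq]; linarith
          have hts0 : 0 < |t - s| := abs_pos.2 htspos.ne'
          have hnum : κ ^ r * v ^ (α*r) / L ^ r ≤ |g t - g s| ^ r := by
            have heq : κ ^ r * v ^ (α*r) / L ^ r = (κ * v ^ α / L) ^ r := by
              rw [Real.div_rpow (by positivity) hL0.le,
                Real.mul_rpow hκ0.le (Real.rpow_nonneg hv0.le _), Real.rpow_mul hv0.le]
            rw [heq]
            exact Real.rpow_le_rpow (by positivity) habs hr0.le
          have hden : |t - s| ^ (r + 1/2) ≤ v ^ (r + 1/2) :=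
            Real.rpow_le_rpow (abs_nonneg _) hts (by linarith)
          calc c = (κ ^ r * v ^ (α*r) / L ^ r) / v ^ (r + 1/2) := hc
            _ ≤ |g t - g s| ^ r / |t - s| ^ (r + 1/2) :=
                div_le_div₀ (by positivity) hnum (Real.rpow_pos_of_pos hts0 _) hden
        -- Step C : key real inequality
        have hkey : v⁻¹ ≤ c * (v/2) := by
          have key := hδkey v ⟨hv0, hvδ⟩
          rw [← hL] at key
          have hvε : 0 < v ^ ε := Real.rpow_pos_of_pos hv0 ε
          have e1 : v ^ (α*r) / v ^ (r + 1/2) * v = v ^ (-1 - ε) := by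
            rw [← Real.rpow_sub hv0, ← Real.rpow_add_one hv0.ne']
            congr 1
            simp only [hα, hε]
            field_simp
            ring
            done
          have e2 : v ^ (-1 - ε : ℝ) = v⁻¹ * (v ^ ε)⁻¹ := by
            rw [show (-1 - ε : ℝ) = (-1) - ε by ring, Real.rpow_sub hv0, Real.rpow_neg_one,
              div_eq_mul_inv]
          have e3 : c * (v/2) = κ ^ r / 2 * (v⁻¹ * (v ^ ε)⁻¹) / L ^ r := by
            rw [hc, ← e2, ← e1]; ring
          rw [e3, le_div_iff₀ hLr]
          have h4 : (v ^ ε * L ^ r) * (v⁻¹ * (v ^ ε)⁻¹) = v⁻¹ * L ^ r := by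
            field_simp
          have h5 := mul_le_mul_of_nonneg_right key
            (by positivity : (0:ℝ) ≤ v⁻¹ * (v ^ ε)⁻¹)
          rw [h4] at h5
          linarith
        -- Step B : assemble
        have hsubv : Ioo (3/4:ℝ) (3/4 + v/2) ⊆ Ioo (3/4:ℝ) (7/8) :=
          Set.Ioo_subset_Ioo le_rfl (by linarith)
        calc ENNReal.ofReal v⁻¹
            ≤ ENNReal.ofReal c * volume (Ioo (3/4:ℝ) (3/4 + v/2)) := by
              rw [Real.volume_Ioo, show (3/4 + v/2 - 3/4 : ℝ) = v/2 by ring,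
                ← ENNReal.ofReal_mul hc0.le]
              exact ENNReal.ofReal_le_ofReal hkey
          _ = ∫⁻ _ in Ioo (3/4:ℝ) (3/4 + v/2), ENNReal.ofReal c := (setLIntegral_const _ _).symm
          _ ≤ ∫⁻ s in Ioo (3/4:ℝ) (3/4 + v/2),
              ENNReal.ofReal (|g t - g s| ^ r / |t - s| ^ (r + 1/2)) := by
              refine lintegral_mono_ae ?_
              filter_upwards [ae_restrict_mem measurableSet_Ioo] with s hs
              exact ENNReal.ofReal_le_ofReal (hA s hs)
          _ ≤ ∫⁻ s in Ioo (3/4:ℝ) (7/8),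
              ENNReal.ofReal (|g t - g s| ^ r / |t - s| ^ (r + 1/2)) :=
              lintegral_mono_set hsubv
    _ ≤ ∫⁻ t in Ioo (3/4:ℝ) (7/8), (∫⁻ s in Ioo (3/4:ℝ) (7/8),
          ENNReal.ofReal (|g t - g s| ^ r / |t - s| ^ (r + 1/2))) :=
        lintegral_mono_set hsubδ
end
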